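/- arXiv:1009.0285 — 9 statements merged into one kernel-verified Lean document; each statement's English description precedes it below -/
import Mathlib

section
/- For positive integers m and k, each of the four component functions f(x,y) of the Lawson immersion Ψ_{m,k}, namely cos(mx)cos y, sin(mx)cos y, cos(kx)sin y and sin(kx)sin y, satisfies the eigenvalue equation −(1/p(y)²) ∂²f/∂x² − (1/p(y)) ∂/∂y ( p(y) ∂f/∂y ) = 2 f at every point (x,y) ∈ ℝ² with p(y) ≠ 0, where p(y) = √(k² + (m² − k²)cos²y). -/
open Real

private lemma lawson_hdsin (c x : ℝ) :
    HasDerivAt (fun t => Real.sin (c*t)) (c * Real.cos (c*x)) x := by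
  simpa [mul_comm, Function.comp_def] using (Real.hasDerivAt_sin (c*x)).comp x ((hasDerivAt_id x).const_mul c)

private lemma lawson_hdcos (c x : ℝ) :
    HasDerivAt (fun t => Real.cos (c*t)) (-c * Real.sin (c*x)) x := by
  simpa [mul_comm, Function.comp_def] using (Real.hasDerivAt_cos (c*x)).comp x ((hasDerivAt_id x).const_mul c)

private lemma lawson_xsec_cos (c a x : ℝ) :
    deriv (deriv (fun x' => Real.cos (c*x') * a)) x = -(c^2) * (Real.cos (c*x) * a) := by
  have h1 : deriv (fun x' => Real.cos (c*x') * a) = fun x' => (-c) * Real.sin (c*x') * a := by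
    funext t
    rw [((lawson_hdcos c t).mul_const a).deriv]
  rw [h1, ((((lawson_hdsin c x).const_mul (-c)).mul_const a)).deriv]; ring

private lemma lawson_xsec_sin (c a x : ℝ) :
    deriv (deriv (fun x' => Real.sin (c*x') * a)) x = -(c^2) * (Real.sin (c*x) * a) := by
  have h1 : deriv (fun x' => Real.sin (c*x') * a) = fun x' => c * Real.cos (c*x') * a := by
    funext t
    rw [((lawson_hdsin c t).mul_const a).deriv]
  rw [h1, ((((lawson_hdcos c x).const_mul c).mul_const a)).deriv]; ring

private lemma lawson_yder_cos (p : ℝ → ℝ) (y P' : ℝ) (hp : HasDerivAt p P' y) (c : ℝ) :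
    deriv (fun y' => p y' * deriv (fun y'' => c * Real.cos y'') y') y
      = P' * (c * -Real.sin y) + p y * (c * -Real.cos y) := by
  have h1 : (fun y' => p y' * deriv (fun y'' => c * Real.cos y'') y')
      = fun y' => p y' * (c * -Real.sin y') := by
    funext t; congr 1
    simpa using ((Real.hasDerivAt_cos t).const_mul c).deriv
  rw [h1]
  have h2 : HasDerivAt (fun t => c * -Real.sin t) (c * -Real.cos y) y := by
    simpa [mul_neg, Pi.neg_def] using ((Real.hasDerivAt_sin y).const_mul c).neg
  exact (hp.mul h2).deriv

private lemma lawson_yder_sin (p : ℝ → ℝ) (y P' : ℝ) (hp : HasDerivAt p P' y) (c : ℝ) :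
    deriv (fun y' => p y' * deriv (fun y'' => c * Real.sin y'') y') y
      = P' * (c * Real.cos y) + p y * (c * -Real.sin y) := by
  have h1 : (fun y' => p y' * deriv (fun y'' => c * Real.sin y'') y')
      = fun y' => p y' * (c * Real.cos y') := by
    funext t; congr 1
    simpa using ((Real.hasDerivAt_sin t).const_mul c).deriv
  rw [h1]
  have h2 : HasDerivAt (fun t => c * Real.cos t) (c * -Real.sin y) y := by
    simpa [mul_neg] using ((Real.hasDerivAt_cos y).const_mul c)
  exact (hp.mul h2).deriv

/-- Each component of the Lawson immersion `Ψ_{m,k}` is an eigenfunction of the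
Laplace–Beltrami operator `Δf = −(1/p²) f_{xx} − (1/p)(p f_y)_y` of the induced metric,
with eigenvalue `2`, at every point where `p(y) ≠ 0`. -/
theorem lawson_components_eigenfunctions (m k : ℕ) (hm : 0 < m) (hk : 0 < k)
    (Ψ : ℝ → ℝ → Fin 4 → ℝ)
    (hΨ : ∀ x y : ℝ, Ψ x y =
      ![Real.cos (m * x) * Real.cos y, Real.sin (m * x) * Real.cos y,
        Real.cos (k * x) * Real.sin y, Real.sin (k * x) * Real.sin y])
    (p : ℝ → ℝ)
    (hp : ∀ y : ℝ, p y = Real.sqrt ((k : ℝ) ^ 2 + ((m : ℝ) ^ 2 - (k : ℝ) ^ 2) * Real.cos y ^ 2)) :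
    ∀ x y : ℝ, p y ≠ 0 → ∀ i : Fin 4,
      -(1 / (p y) ^ 2) * deriv (deriv (fun x' => Ψ x' y i)) x
        - (1 / p y) * deriv (fun y' => p y' * deriv (fun y'' => Ψ x y'' i) y') y
      = 2 * Ψ x y i := by
  intro x y hpy i
  have hqnn : ∀ t : ℝ, 0 ≤ (k : ℝ) ^ 2 + ((m : ℝ) ^ 2 - (k : ℝ) ^ 2) * Real.cos t ^ 2 := by
    intro t
    nlinarith [sq_nonneg ((k:ℝ) * Real.sin t), sq_nonneg ((m:ℝ) * Real.cos t),
      Real.sin_sq_add_cos_sq t]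
  have hqne : (k : ℝ) ^ 2 + ((m : ℝ) ^ 2 - (k : ℝ) ^ 2) * Real.cos y ^ 2 ≠ 0 := by
    intro h
    apply hpy
    rw [hp, h, Real.sqrt_zero]
  have hp2 : p y ^ 2 = (k : ℝ) ^ 2 + ((m : ℝ) ^ 2 - (k : ℝ) ^ 2) * Real.cos y ^ 2 := by
    rw [hp]; exact Real.sq_sqrt (hqnn y)
  have hpd : HasDerivAt p (-(((m:ℝ)^2-(k:ℝ)^2) * Real.sin y * Real.cos y) / p y) y := by
    have hq : HasDerivAt (fun t => (k : ℝ) ^ 2 + ((m : ℝ) ^ 2 - (k : ℝ) ^ 2) * Real.cos t ^ 2)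
        (((m:ℝ)^2-(k:ℝ)^2) * (2 * Real.cos y * -Real.sin y)) y := by
      have h1 : HasDerivAt (fun t => Real.cos t ^ 2) (2 * Real.cos y ^ 1 * -Real.sin y) y :=
        (Real.hasDerivAt_cos y).pow 2
      simpa [pow_one, mul_comm, mul_assoc, mul_left_comm] using
        (h1.const_mul (((m:ℝ)^2-(k:ℝ)^2))).const_add ((k:ℝ)^2)
    have h2 := hq.sqrt hqne
    have hpfun : p = fun t => Real.sqrt ((k : ℝ) ^ 2 + ((m : ℝ) ^ 2 - (k : ℝ) ^ 2) * Real.cos t ^ 2) :=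
      funext hp
    rw [hpfun]
    convert h2 using 1
    beta_reduce
    rw [← hp y, div_eq_div_iff hpy (by simpa using hpy)]
    ring
  have hpyth := Real.sin_sq_add_cos_sq y
  fin_cases i
  · simp only [hΨ, Matrix.cons_val_zero, Fin.isValue, Fin.zero_eta]
    rw [lawson_xsec_cos, lawson_yder_cos p y _ hpd (Real.cos (↑m * x))]
    field_simp
    linear_combination (-(Real.cos (↑m * x) * Real.cos y * ((m:ℝ)^2 - (k:ℝ)^2))) * hpyth
      + (-(Real.cos (↑m * x) * Real.cos y)) * hp2
  · simp only [hΨ, Fin.isValue, Fin.mk_one, Matrix.cons_val_one, Matrix.head_cons, Matrix.cons_val_zero]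
    rw [lawson_xsec_sin, lawson_yder_cos p y _ hpd (Real.sin (↑m * x))]
    field_simp
    linear_combination (-(Real.sin (↑m * x) * Real.cos y * ((m:ℝ)^2 - (k:ℝ)^2))) * hpyth
      + (-(Real.sin (↑m * x) * Real.cos y)) * hp2
  · simp only [hΨ, show (⟨2, by norm_num⟩ : Fin 4) = 2 from rfl, Matrix.cons_val_two,
      Matrix.tail_cons, Matrix.head_cons]
    rw [lawson_xsec_cos, lawson_yder_sin p y _ hpd (Real.cos (↑k * x))]
    field_simp
    linear_combination (-(Real.cos (↑k * x) * Real.sin y)) * hp2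
  · simp only [hΨ, show (⟨3, by norm_num⟩ : Fin 4) = 3 from rfl, Matrix.cons_val_three,
      Matrix.tail_cons, Matrix.head_cons]
    rw [lawson_xsec_sin, lawson_yder_sin p y _ hpd (Real.sin (↑k * x))]
    field_simp
    linear_combination (-(Real.sin (↑k * x) * Real.sin y)) * hp2
end

section
/- For positive integers m and k, the function φ(y) = cos y satisfies the Sturm–Liouville equation −(1/p(y)) (p(y) φ'(y))' + (l²/p(y)² − λ) φ(y) = 0 for all y ∈ ℝ, with parameter l = m and eigenvalue λ = 2, where p(y) = √(k² + (m² − k²)cos²y). -/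
open Real

/-- The function `φ(y) = cos y` satisfies the Sturm–Liouville equation
`−(1/p)(p φ')' + (l²/p² − λ)φ = 0` with `l = m` and `λ = 2`, where
`p(y) = √(k² + (m² − k²)cos²y)`. -/
theorem cos_solves_sturm_liouville (m k : ℕ) (hm : 0 < m) (hk : 0 < k)
    (p : ℝ → ℝ)
    (hp : ∀ y : ℝ, p y = Real.sqrt ((k : ℝ) ^ 2 + ((m : ℝ) ^ 2 - (k : ℝ) ^ 2) * Real.cos y ^ 2)) :
    ∀ y : ℝ,
      -(1 / p y) * deriv (fun y' => p y' * deriv Real.cos y') y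
        + ((m : ℝ) ^ 2 / (p y) ^ 2 - 2) * Real.cos y = 0 := by
  have hpfun : p = fun y : ℝ =>
      Real.sqrt ((k : ℝ) ^ 2 + ((m : ℝ) ^ 2 - (k : ℝ) ^ 2) * Real.cos y ^ 2) := funext hp
  subst hpfun
  intro y
  set q : ℝ → ℝ := fun y : ℝ => (k : ℝ) ^ 2 + ((m : ℝ) ^ 2 - (k : ℝ) ^ 2) * Real.cos y ^ 2
    with hq
  have hk1 : (1 : ℝ) ≤ (k : ℝ) := by exact_mod_cast hk
  have hm1 : (1 : ℝ) ≤ (m : ℝ) := by exact_mod_cast hm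
  have hqpos : ∀ z : ℝ, 0 < q z := by
    intro z
    have h1 := Real.sin_sq_add_cos_sq z
    have hc1 : Real.cos z ^ 2 ≤ 1 := Real.cos_sq_le_one z
    have hk2 : (1 : ℝ) ≤ (k : ℝ) ^ 2 := by nlinarith
    have hm2 : (1 : ℝ) ≤ (m : ℝ) ^ 2 := by nlinarith
    simp only [hq]
    nlinarith [sq_nonneg (Real.cos z), hc1, hk2, hm2]
  have hPpos : 0 < Real.sqrt (q y) := Real.sqrt_pos.mpr (hqpos y)
  have hP2 : Real.sqrt (q y) ^ 2 = q y := Real.sq_sqrt (le_of_lt (hqpos y))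
  -- derivative of q
  have hq' : HasDerivAt q (((m : ℝ) ^ 2 - (k : ℝ) ^ 2) *
      (2 * Real.cos y * (-Real.sin y))) y := by
    have hc : HasDerivAt (fun z : ℝ => Real.cos z ^ 2)
        (2 * Real.cos y * (-Real.sin y)) y := by
      exact ((Real.hasDerivAt_cos y).pow 2 : HasDerivAt (fun z : ℝ => Real.cos z ^ 2) _ y).congr_deriv
        (by norm_num)
    simpa [hq, mul_comm, mul_left_comm, mul_assoc] using
      ((hc.const_mul (((m : ℝ) ^ 2 - (k : ℝ) ^ 2))).const_add ((k : ℝ) ^ 2))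
  have hsq : HasDerivAt (fun z : ℝ => Real.sqrt (q z))
      (((m : ℝ) ^ 2 - (k : ℝ) ^ 2) * (2 * Real.cos y * (-Real.sin y)) /
        (2 * Real.sqrt (q y))) y := hq'.sqrt (ne_of_gt (hqpos y))
  have hsin : HasDerivAt (fun z : ℝ => -Real.sin z) (-Real.cos y) y :=
    (Real.hasDerivAt_sin y).neg
  have hf : HasDerivAt (fun z : ℝ => Real.sqrt (q z) * (-Real.sin z))
      (((m : ℝ) ^ 2 - (k : ℝ) ^ 2) * (2 * Real.cos y * (-Real.sin y)) /
        (2 * Real.sqrt (q y)) * (-Real.sin y) + Real.sqrt (q y) * (-Real.cos y)) y :=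
    hsq.mul hsin
  have hderiv : deriv (fun y' : ℝ => Real.sqrt (q y') * deriv Real.cos y') y
      = ((m : ℝ) ^ 2 - (k : ℝ) ^ 2) * (2 * Real.cos y * (-Real.sin y)) /
        (2 * Real.sqrt (q y)) * (-Real.sin y) + Real.sqrt (q y) * (-Real.cos y) := by
    have : (fun y' : ℝ => Real.sqrt (q y') * deriv Real.cos y')
        = fun z : ℝ => Real.sqrt (q z) * (-Real.sin z) := by
      funext z; rw [Real.deriv_cos]
    rw [this, hf.deriv]
  rw [hderiv]
  have hs := Real.sin_sq_add_cos_sq y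
  set P := Real.sqrt (q y) with hPdef
  have hq2 : q y = (k : ℝ) ^ 2 + ((m : ℝ) ^ 2 - (k : ℝ) ^ 2) * Real.cos y ^ 2 := rfl
  have hPE : P = Real.sqrt ((k : ℝ) ^ 2 + ((m : ℝ) ^ 2 - (k : ℝ) ^ 2) * Real.cos y ^ 2) := rfl
  beta_reduce
  rw [← hPE]
  have hP2' : P ^ 2 = (k : ℝ) ^ 2 + ((m : ℝ) ^ 2 - (k : ℝ) ^ 2) * Real.cos y ^ 2 := hP2
  have key : (m : ℝ) ^ 2 - ((m : ℝ) ^ 2 - (k : ℝ) ^ 2) * Real.sin y ^ 2 - P ^ 2 = 0 := by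
    linear_combination (-((m : ℝ) ^ 2 - (k : ℝ) ^ 2)) * hs - hP2'
  field_simp
  linear_combination (Real.cos y) * key
end

section
/- For positive integers m and k, the function φ(y) = sin y satisfies the Sturm–Liouville equation −(1/p(y)) (p(y) φ'(y))' + (l²/p(y)² − λ) φ(y) = 0 for all y ∈ ℝ, with parameter l = k and eigenvalue λ = 2, where p(y) = √(k² + (m² − k²)cos²y). -/
open Real

/-- The function `φ(y) = sin y` satisfies the Sturm–Liouville equation
`−(1/p)(p φ')' + (l²/p² − λ)φ = 0` with `l = k` and `λ = 2`, where
`p(y) = √(k² + (m² − k²)cos²y)`. -/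
theorem sin_solves_sturm_liouville (m k : ℕ) (hm : 0 < m) (hk : 0 < k)
    (p : ℝ → ℝ)
    (hp : ∀ y : ℝ, p y = Real.sqrt ((k : ℝ) ^ 2 + ((m : ℝ) ^ 2 - (k : ℝ) ^ 2) * Real.cos y ^ 2)) :
    ∀ y : ℝ,
      -(1 / p y) * deriv (fun y' => p y' * deriv Real.sin y') y
        + ((k : ℝ) ^ 2 / (p y) ^ 2 - 2) * Real.sin y = 0 := by
  intro y
  set a : ℝ := (m : ℝ) ^ 2 - (k : ℝ) ^ 2 with ha
  have hk1 : (1 : ℝ) ≤ (k : ℝ) := by exact_mod_cast hk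
  have hm1 : (1 : ℝ) ≤ (m : ℝ) := by exact_mod_cast hm
  have hqpos : ∀ z : ℝ, 0 < (k : ℝ) ^ 2 + a * Real.cos z ^ 2 := by
    intro z
    have h1 := Real.sin_sq_add_cos_sq z
    nlinarith [sq_nonneg (Real.sin z), sq_nonneg (Real.cos z), sq_nonneg ((k:ℝ) - 1),
      sq_nonneg ((m:ℝ) - 1)]
  have hppos : 0 < p y := by
    rw [hp]; exact Real.sqrt_pos.mpr (hqpos y)
  have hpsq : p y ^ 2 = (k : ℝ) ^ 2 + a * Real.cos y ^ 2 := by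
    rw [hp]; exact Real.sq_sqrt (hqpos y).le
  have hq : HasDerivAt (fun y' => (k : ℝ) ^ 2 + a * Real.cos y' ^ 2)
      (a * (2 * Real.cos y ^ 1 * (-Real.sin y))) y := by
    have := ((Real.hasDerivAt_cos y).pow 2).const_mul a
    simpa using this.const_add ((k : ℝ) ^ 2)
  have hsq : HasDerivAt (fun y' => Real.sqrt ((k : ℝ) ^ 2 + a * Real.cos y' ^ 2))
      (a * (2 * Real.cos y ^ 1 * (-Real.sin y)) / (2 * Real.sqrt ((k : ℝ) ^ 2 + a * Real.cos y ^ 2))) y :=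
    hq.sqrt (hqpos y).ne'
  have hderiv : HasDerivAt (fun y' => p y' * deriv Real.sin y')
      (a * (2 * Real.cos y ^ 1 * (-Real.sin y)) / (2 * p y) * Real.cos y
        + p y * (-Real.sin y)) y := by
    have hfun : (fun y' => p y' * deriv Real.sin y')
        = fun y' => Real.sqrt ((k : ℝ) ^ 2 + a * Real.cos y' ^ 2) * Real.cos y' := by
      funext z; rw [hp, Real.deriv_sin]
    rw [hfun]
    have := hsq.mul (Real.hasDerivAt_cos y)
    rw [← hp y] at this
    exact this
  rw [hderiv.deriv]
  have hpne : p y ≠ 0 := hppos.ne'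
  have hs := Real.sin_sq_add_cos_sq y
  field_simp
  linear_combination (-Real.sin y) * hpsq + (-Real.sin y) * Real.cos y ^ 2 * ha
end

section
/- Let m and k be positive integers with m ≠ k, and let p(y) = √(k² + (m² − k²)cos²y). Then every twice continuously differentiable 2π-periodic function φ : ℝ → ℝ satisfying −(1/p(y))(p(y)φ'(y))' + (m²/p(y)² − 2)φ(y) = 0 for all y is a constant multiple of cos y; that is, the eigenvalue λ = 2 of the periodic Sturm–Liouville problem with l = m has multiplicity one. -/
open Real

/-- For `m ≠ k`, the eigenvalue `λ = 2` of the periodic Sturm–Liouville problem with `l = m`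
has multiplicity one: every `C²` `2π`-periodic solution is a constant multiple of `cos y`. -/
theorem multiplicity_one_cos (m k : ℕ) (hm : 0 < m) (hk : 0 < k) (hmk : m ≠ k)
    (p : ℝ → ℝ)
    (hp : ∀ y : ℝ, p y = Real.sqrt ((k : ℝ) ^ 2 + ((m : ℝ) ^ 2 - (k : ℝ) ^ 2) * Real.cos y ^ 2))
    (φ : ℝ → ℝ) (hφ : ContDiff ℝ 2 φ)
    (hper : ∀ y : ℝ, φ (y + 2 * π) = φ y)
    (heq : ∀ y : ℝ,
      -(1 / p y) * deriv (fun y' => p y' * deriv φ y') y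
        + ((m : ℝ) ^ 2 / (p y) ^ 2 - 2) * φ y = 0) :
    ∃ c : ℝ, ∀ y : ℝ, φ y = c * Real.cos y := by
  have hm1 : (1:ℝ) ≤ (m:ℝ) := by exact_mod_cast hm
  have hk1 : (1:ℝ) ≤ (k:ℝ) := by exact_mod_cast hk
  set a : ℝ := (m:ℝ)^2 - (k:ℝ)^2 with ha
  have ha0 : a ≠ 0 := by
    have h : (m:ℝ) ≠ (k:ℝ) := by exact_mod_cast hmk
    intro h0
    apply h
    have hm0 : (0:ℝ) ≤ (m:ℝ) := by positivity
    have hk0 : (0:ℝ) ≤ (k:ℝ) := by positivity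
    nlinarith [sub_eq_zero.mp h0]
  have hq_pos : ∀ y : ℝ, 0 < (k:ℝ)^2 + a * Real.cos y ^ 2 := by
    intro y
    have h := Real.sin_sq_add_cos_sq y
    have h1 : (0:ℝ) ≤ ((k:ℝ)^2 - 1) * Real.sin y ^ 2 :=
      mul_nonneg (by nlinarith) (sq_nonneg _)
    have h2 : (0:ℝ) ≤ ((m:ℝ)^2 - 1) * Real.cos y ^ 2 :=
      mul_nonneg (by nlinarith) (sq_nonneg _)
    rw [ha]
    nlinarith [h, h1, h2]
  have hp_pos : ∀ y : ℝ, 0 < p y := by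
    intro y; rw [hp y]; exact Real.sqrt_pos.mpr (hq_pos y)
  have hp_ne : ∀ y : ℝ, p y ≠ 0 := fun y => (hp_pos y).ne'
  have hp_sq : ∀ y : ℝ, p y ^ 2 = (k:ℝ)^2 + a * Real.cos y ^ 2 := by
    intro y; rw [hp y]; exact Real.sq_sqrt (hq_pos y).le
  -- derivative of p
  have hpd : ∀ y : ℝ, HasDerivAt p (-(a * Real.cos y * Real.sin y) / p y) y := by
    intro y
    have hg : HasDerivAt (fun y' => (k:ℝ)^2 + a * Real.cos y' ^ 2)
        (a * (2 * Real.cos y ^ 1 * (-Real.sin y))) y :=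
      (((Real.hasDerivAt_cos y).pow 2).const_mul a).const_add ((k:ℝ)^2)
    have hs : HasDerivAt Real.sqrt
        (1 / (2 * Real.sqrt ((k:ℝ)^2 + a * Real.cos y ^ 2)))
        ((k:ℝ)^2 + a * Real.cos y ^ 2) :=
      Real.hasDerivAt_sqrt (hq_pos y).ne'
    have h2 : HasDerivAt (fun y' => Real.sqrt ((k:ℝ)^2 + a * Real.cos y' ^ 2))
        (1 / (2 * Real.sqrt ((k:ℝ)^2 + a * Real.cos y ^ 2)) *
          (a * (2 * Real.cos y ^ 1 * (-Real.sin y)))) y := hs.comp y hg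
    have hpe : p = fun y' => Real.sqrt ((k:ℝ)^2 + a * Real.cos y' ^ 2) := funext hp
    have hval : 1 / (2 * Real.sqrt ((k:ℝ)^2 + a * Real.cos y ^ 2)) *
          (a * (2 * Real.cos y ^ 1 * (-Real.sin y)))
        = -(a * Real.cos y * Real.sin y) / p y := by
      rw [← hp y, pow_one]
      have := hp_ne y
      field_simp
    rw [← hval, hpe]
    exact h2
  -- differentiability of φ
  have hφd : Differentiable ℝ φ := hφ.differentiable (by norm_num)
  have hφ1 : ContDiff ℝ 1 (deriv φ) := by
    have h2 : ContDiff ℝ (1 + 1) φ := by norm_num; exact hφ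
    exact (contDiff_succ_iff_deriv.mp h2).2.2
  have hφ'd : Differentiable ℝ (deriv φ) := hφ1.differentiable one_ne_zero
  -- polynomial form of the ODE
  have hE : ∀ y : ℝ, p y ^ 2 * deriv (deriv φ) y
      = ((m:ℝ)^2 - 2 * p y ^ 2) * φ y + a * Real.cos y * Real.sin y * deriv φ y := by
    intro y
    have hprod : HasDerivAt (fun y' => p y' * deriv φ y')
        (-(a * Real.cos y * Real.sin y) / p y * deriv φ y + p y * deriv (deriv φ) y) y :=
      (hpd y).mul (hφ'd y).hasDerivAt
    have h := heq y
    rw [hprod.deriv] at h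
    have hpn := hp_ne y
    field_simp at h
    have h2 : p y ^ 2 * ((p y ^ 2 * deriv (deriv φ) y)
        - (((m:ℝ)^2 - 2 * p y ^ 2) * φ y + a * Real.cos y * Real.sin y * deriv φ y)) = 0 := by
      linear_combination (-(p y ^ 2)) * h
    have h3 := (mul_eq_zero.mp h2).resolve_left (pow_ne_zero 2 hpn)
    linarith [h3]
  -- W is constant
  set W : ℝ → ℝ := fun y => p y * (deriv φ y * Real.cos y + φ y * Real.sin y) with hWdef
  have hWd : ∀ y : ℝ, HasDerivAt W 0 y := by
    intro y
    have h1 : HasDerivAt (fun y' => deriv φ y' * Real.cos y' + φ y' * Real.sin y')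
        (deriv (deriv φ) y * Real.cos y + deriv φ y * (-Real.sin y)
          + (deriv φ y * Real.sin y + φ y * Real.cos y)) y :=
      ((hφ'd y).hasDerivAt.mul (Real.hasDerivAt_cos y)).add
        ((hφd y).hasDerivAt.mul (Real.hasDerivAt_sin y))
    have h2 : HasDerivAt W
        (-(a * Real.cos y * Real.sin y) / p y * (deriv φ y * Real.cos y + φ y * Real.sin y)
          + p y * (deriv (deriv φ) y * Real.cos y + deriv φ y * (-Real.sin y)
            + (deriv φ y * Real.sin y + φ y * Real.cos y))) y := (hpd y).mul h1
    have hE' := hE y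
    have hpn := hp_ne y
    have hsq := hp_sq y
    have htrig := Real.sin_sq_add_cos_sq y
    have hval : (0:ℝ)
        = -(a * Real.cos y * Real.sin y) / p y * (deriv φ y * Real.cos y + φ y * Real.sin y)
          + p y * (deriv (deriv φ) y * Real.cos y + deriv φ y * (-Real.sin y)
            + (deriv φ y * Real.sin y + φ y * Real.cos y)) := by
      field_simp
      linear_combination (-(Real.cos y))*hE' + (a * φ y * Real.cos y)*htrig
        + (φ y * Real.cos y)*hsq - (φ y * Real.cos y)*ha
    rw [hval]
    exact h2
  have hWconst : ∀ y : ℝ, W y = W 0 :=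
    fun y => is_const_of_deriv_eq_zero (fun x => (hWd x).differentiableAt)
      (fun x => (hWd x).deriv) y 0
  -- R and its derivative
  set R : ℝ → ℝ := fun y => deriv φ y * Real.sin y - φ y * Real.cos y with hRdef
  have hRd : ∀ y : ℝ, HasDerivAt R (a * W 0 * Real.sin y ^ 2 / p y ^ 3) y := by
    intro y
    have h1 : HasDerivAt R
        (deriv (deriv φ) y * Real.sin y + deriv φ y * Real.cos y
          - (deriv φ y * Real.cos y + φ y * (-Real.sin y))) y :=
      ((hφ'd y).hasDerivAt.mul (Real.hasDerivAt_sin y)).sub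
        ((hφd y).hasDerivAt.mul (Real.hasDerivAt_cos y))
    have hE' := hE y
    have hW : p y * (deriv φ y * Real.cos y + φ y * Real.sin y) = W 0 := hWconst y
    have hpn := hp_ne y
    have hsq := hp_sq y
    have htrig := Real.sin_sq_add_cos_sq y
    have hval : a * W 0 * Real.sin y ^ 2 / p y ^ 3
        = deriv (deriv φ) y * Real.sin y + deriv φ y * Real.cos y
          - (deriv φ y * Real.cos y + φ y * (-Real.sin y)) := by
      field_simp
      linear_combination (-(p y * Real.sin y))*hE' + (a * p y * Real.sin y * φ y)*htrig
        + (p y * Real.sin y * φ y)*hsq - (p y * Real.sin y * φ y)*ha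
        - (a * Real.sin y^2)*hW
    rw [hval]
    exact h1
  -- continuity of p and of the integrand
  have hpc : Continuous p := by
    have hpe : p = fun y' => Real.sqrt ((k:ℝ)^2 + a * Real.cos y' ^ 2) := funext hp
    rw [hpe]
    exact Real.continuous_sqrt.comp
      (continuous_const.add (continuous_const.mul (Real.continuous_cos.pow 2)))
  have hfc : Continuous fun y => Real.sin y ^ 2 / p y ^ 3 :=
    (Real.continuous_sin.pow 2).div (hpc.pow 3) (fun y => pow_ne_zero 3 (hp_ne y))
  -- integral identity
  have hint : ∫ y in (0:ℝ)..(2*π), a * W 0 * (Real.sin y ^ 2 / p y ^ 3) = R (2*π) - R 0 := by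
    apply intervalIntegral.integral_eq_sub_of_hasDerivAt
    · intro x _
      have := hRd x
      have heqv : a * W 0 * Real.sin x ^ 2 / p x ^ 3
          = a * W 0 * (Real.sin x ^ 2 / p x ^ 3) := by ring
      rw [heqv] at this
      exact this
    · exact (continuous_const.mul hfc).intervalIntegrable _ _
  have hR2π : R (2*π) = R 0 := by
    rw [hRdef]
    simp only
    rw [Real.sin_two_pi, Real.cos_two_pi, Real.sin_zero, Real.cos_zero]
    have h0 := hper 0
    rw [zero_add] at h0
    rw [h0]
    ring
  -- W 0 = 0
  have hW0 : W 0 = 0 := by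
    by_contra hW0
    have hIpos : 0 < ∫ y in (0:ℝ)..(2*π), Real.sin y ^ 2 / p y ^ 3 := by
      have hsplit : (∫ y in (0:ℝ)..π, Real.sin y ^ 2 / p y ^ 3)
          + (∫ y in (π:ℝ)..(2*π), Real.sin y ^ 2 / p y ^ 3)
          = ∫ y in (0:ℝ)..(2*π), Real.sin y ^ 2 / p y ^ 3 :=
        intervalIntegral.integral_add_adjacent_intervals
          (hfc.intervalIntegrable _ _) (hfc.intervalIntegrable _ _)
      rw [← hsplit]
      have h1 : 0 < ∫ y in (0:ℝ)..π, Real.sin y ^ 2 / p y ^ 3 := by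
        refine intervalIntegral.intervalIntegral_pos_of_pos_on
          (hfc.intervalIntegrable _ _) (fun x hx => ?_) Real.pi_pos
        have hs : 0 < Real.sin x := Real.sin_pos_of_pos_of_lt_pi hx.1 hx.2
        have := hp_pos x
        positivity
      have h2 : 0 ≤ ∫ y in (π:ℝ)..(2*π), Real.sin y ^ 2 / p y ^ 3 := by
        apply intervalIntegral.integral_nonneg
        · linarith [Real.pi_pos]
        · intro x _
          have := hp_pos x
          positivity
      linarith
    have hzero : a * W 0 * ∫ y in (0:ℝ)..(2*π), Real.sin y ^ 2 / p y ^ 3 = 0 := by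
      rw [← intervalIntegral.integral_const_mul, hint, hR2π, sub_self]
    rcases mul_eq_zero.mp hzero with h | h
    · exact (mul_ne_zero ha0 hW0) h
    · exact hIpos.ne' h
  -- R is constant
  have hRconst : ∀ y : ℝ, R y = R 0 := by
    intro y
    apply is_const_of_deriv_eq_zero
    · intro x; exact (hRd x).differentiableAt
    · intro x
      rw [(hRd x).deriv, hW0]
      ring
  -- conclude
  refine ⟨φ 0, fun y => ?_⟩
  have hWy : W y = 0 := by rw [hWconst y, hW0]
  have hRy := hRconst y
  rw [hWdef] at hWy
  rw [hRdef] at hRy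
  simp only at hWy hRy
  rw [Real.sin_zero, Real.cos_zero] at hRy
  have h1 : deriv φ y * Real.cos y + φ y * Real.sin y = 0 :=
    (mul_eq_zero.mp hWy).resolve_left (hp_ne y)
  have htrig := Real.sin_sq_add_cos_sq y
  linear_combination (Real.sin y)*h1 - (Real.cos y)*hRy - (φ y)*htrig
end

section
/- Let m and k be positive integers with m ≠ k, and let p(y) = √(k² + (m² − k²)cos²y). Then every twice continuously differentiable 2π-periodic function φ : ℝ → ℝ satisfying −(1/p(y))(p(y)φ'(y))' + (k²/p(y)² − 2)φ(y) = 0 for all y is a constant multiple of sin y; that is, the eigenvalue λ = 2 of the periodic Sturm–Liouville problem with l = k has multiplicity one. -/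
open Real Set Filter Topology

namespace MultAux

noncomputable def pf (a b : ℝ) (y : ℝ) : ℝ := Real.sqrt (b + (a - b) * Real.cos y ^ 2)

lemma Ppos {a b : ℝ} (ha : 0 < a) (hb : 0 < b) (y : ℝ) :
    0 < b + (a - b) * Real.cos y ^ 2 := by
  rcases le_or_gt b a with h | h
  · nlinarith [sq_nonneg (Real.cos y)]
  · nlinarith [Real.cos_sq_le_one y, sq_nonneg (Real.cos y)]

lemma pf_pos {a b : ℝ} (ha : 0 < a) (hb : 0 < b) (y : ℝ) : 0 < pf a b y :=
  Real.sqrt_pos.mpr (Ppos ha hb y)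

lemma pf_sq {a b : ℝ} (ha : 0 < a) (hb : 0 < b) (y : ℝ) :
    pf a b y ^ 2 = b + (a - b) * Real.cos y ^ 2 :=
  Real.sq_sqrt (Ppos ha hb y).le

lemma pf_zero {a b : ℝ} : pf a b 0 = Real.sqrt a := by simp [pf]

lemma pf_cont {a b : ℝ} : Continuous (pf a b) := by
  unfold pf
  exact Real.continuous_sqrt.comp (by continuity)

lemma pf_even {a b : ℝ} (y : ℝ) : pf a b (-y) = pf a b y := by simp [pf]

lemma pf_refl {a b : ℝ} (y : ℝ) : pf a b (π - y) = pf a b y := by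
  simp [pf, Real.cos_pi_sub]

lemma pf_pi {a b : ℝ} : pf a b π = Real.sqrt a := by simp [pf]

lemma pf_half {a b : ℝ} : pf a b (π/2) = Real.sqrt b := by simp [pf]

lemma hasDerivAt_pf {a b : ℝ} (ha : 0 < a) (hb : 0 < b) (y : ℝ) :
    HasDerivAt (pf a b) (-(a - b) * Real.sin y * Real.cos y / pf a b y) y := by
  have h1 : HasDerivAt (fun y => b + (a - b) * Real.cos y ^ 2)
      ((a - b) * (2 * Real.cos y * (-Real.sin y))) y := by
    have := ((Real.hasDerivAt_cos y).pow 2).const_mul (a - b)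
    simpa using this.const_add b
  have h2 := (Real.hasDerivAt_sqrt (Ppos ha hb y).ne').comp y h1
  refine h2.congr_deriv (Eq.symm ?_)
  unfold pf
  field_simp [pf]

def IsSol (a b : ℝ) (f : ℝ → ℝ) : Prop :=
  ∀ y, (-(a - b) * Real.sin y * Real.cos y / pf a b y) * deriv f y
      + pf a b y * deriv (deriv f) y
    = ((b - 2 * (b + (a - b) * Real.cos y ^ 2)) / pf a b y) * f y

lemma sin_ode {a b : ℝ} (ha : 0 < a) (hb : 0 < b) (y : ℝ) :
    (-(a - b) * Real.sin y * Real.cos y / pf a b y) * Real.cos y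
      + pf a b y * (-Real.sin y)
    = ((b - 2 * (b + (a - b) * Real.cos y ^ 2)) / pf a b y) * Real.sin y := by
  have hp := (pf_pos ha hb y).ne'
  have hp2 := pf_sq ha hb y
  field_simp
  linear_combination (-Real.sin y) * hp2

lemma aux_deriv {f : ℝ → ℝ} (hf : ContDiff ℝ 2 f) :
    Differentiable ℝ f ∧ Differentiable ℝ (deriv f) ∧ Continuous (deriv (deriv f)) := by
  rw [show (2 : WithTop ℕ∞) = 1 + 1 by norm_num, contDiff_succ_iff_deriv] at hf
  obtain ⟨hd, -, h2⟩ := hf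
  rw [contDiff_one_iff_deriv] at h2
  exact ⟨hd, h2.1, h2.2⟩

lemma wronskian_eq {a b : ℝ} (ha : 0 < a) (hb : 0 < b) {f : ℝ → ℝ}
    (hf : ContDiff ℝ 2 f) (hsol : IsSol a b f) (y : ℝ) :
    pf a b y * (deriv f y * Real.sin y - f y * Real.cos y) = -(Real.sqrt a * f 0) := by
  obtain ⟨hf1, hf2, _⟩ := aux_deriv hf
  set W : ℝ → ℝ := fun t => pf a b t * (deriv f t * Real.sin t - f t * Real.cos t) with hW
  have hWd : ∀ t, HasDerivAt W 0 t := by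
    intro t
    have hF : HasDerivAt f (deriv f t) t := (hf1 t).hasDerivAt
    have hD : HasDerivAt (deriv f) (deriv (deriv f) t) t := (hf2 t).hasDerivAt
    have h1 : HasDerivAt (fun t => deriv f t * Real.sin t - f t * Real.cos t)
        ((deriv (deriv f) t * Real.sin t + deriv f t * Real.cos t)
          - (deriv f t * Real.cos t + f t * (-Real.sin t))) t :=
      (hD.mul (Real.hasDerivAt_sin t)).sub (hF.mul (Real.hasDerivAt_cos t))
    have h2 := (hasDerivAt_pf ha hb t).mul h1
    refine h2.congr_deriv (Eq.symm ?_)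
    have h3 := hsol t
    have h4 := sin_ode ha hb t
    linear_combination (-Real.sin t) * h3 + (f t) * h4
  have hWdiff : Differentiable ℝ W := fun t => (hWd t).differentiableAt
  have hconst : W y = W 0 := is_const_of_deriv_eq_zero hWdiff (fun t => (hWd t).deriv) y 0
  rw [hW] at hconst
  simpa [pf_zero] using hconst


lemma const_of_hasDeriv_zero_Ioo {f : ℝ → ℝ} {A B : ℝ}
    (h : ∀ y ∈ Ioo A B, HasDerivAt f 0 y) :
    ∀ x ∈ Ioo A B, ∀ z ∈ Ioo A B, f x = f z := by
  suffices H : ∀ x z, x ∈ Ioo A B → z ∈ Ioo A B → x ≤ z → f x = f z by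
    intro x hx z hz
    rcases le_total x z with h' | h'
    · exact H _ _ hx hz h'
    · exact (H _ _ hz hx h').symm
  intro x z hx hz hxz
  have hsub : Icc x z ⊆ Ioo A B := fun t ht => ⟨lt_of_lt_of_le hx.1 ht.1, lt_of_le_of_lt ht.2 hz.2⟩
  have hcont : ContinuousOn f (Icc x z) :=
    fun t ht => ((h t (hsub ht)).continuousAt).continuousWithinAt
  exact (constant_of_has_deriv_right_zero hcont
    (fun t ht => ((h t (hsub (Ico_subset_Icc_self ht))).hasDerivWithinAt)) z
    (right_mem_Icc.mpr hxz)).symm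

lemma pos_left_of_deriv_neg {f : ℝ → ℝ} {z d : ℝ} (hd : HasDerivAt f d z) (hz : f z = 0)
    (hneg : d < 0) : ∀ᶠ y in 𝓝[<] z, 0 < f y := by
  have hs := hasDerivAt_iff_tendsto_slope.mp hd
  have hev : ∀ᶠ y in 𝓝[≠] z, slope f z y < 0 := hs.eventually (Filter.Tendsto.eventually_lt_const hneg tendsto_id)
  have hle : 𝓝[<] z ≤ 𝓝[≠] z := nhdsWithin_mono z (fun y hy => ne_of_lt hy)
  filter_upwards [hle hev, eventually_mem_nhdsWithin] with y h1 (h2 : y < z)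
  rw [slope_def_field, hz, sub_zero] at h1
  have h3 : y - z < 0 := by linarith
  nlinarith [div_mul_cancel₀ (f y) (show y - z ≠ 0 by linarith)]

lemma neg_right_of_deriv_neg {f : ℝ → ℝ} {z d : ℝ} (hd : HasDerivAt f d z) (hz : f z = 0)
    (hneg : d < 0) : ∀ᶠ y in 𝓝[>] z, f y < 0 := by
  have hs := hasDerivAt_iff_tendsto_slope.mp hd
  have hev : ∀ᶠ y in 𝓝[≠] z, slope f z y < 0 := hs.eventually (Filter.Tendsto.eventually_lt_const hneg tendsto_id)
  have hle : 𝓝[>] z ≤ 𝓝[≠] z := nhdsWithin_mono z (fun y hy => ne_of_gt hy)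
  filter_upwards [hle hev, eventually_mem_nhdsWithin] with y h1 (h2 : z < y)
  have h3 : 0 < y - z := by linarith
  rw [slope_def_field, hz, sub_zero] at h1
  nlinarith [div_mul_cancel₀ (f y) (show y - z ≠ 0 by linarith)]

lemma multiple_of_sin {f : ℝ → ℝ} (hf1 : Differentiable ℝ f) (hf2 : Continuous (deriv f))
    (hper : ∀ y, f (y + 2 * π) = f y)
    (hw : ∀ y, deriv f y * Real.sin y - f y * Real.cos y = 0) :
    ∃ c, ∀ y, f y = c * Real.sin y := by
  have hpi := Real.pi_pos
  -- constancy of f / sin on intervals where sin ≠ 0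
  have key : ∀ A B : ℝ, (∀ y ∈ Ioo A B, Real.sin y ≠ 0) →
      ∀ x ∈ Ioo A B, ∀ z ∈ Ioo A B, f x / Real.sin x = f z / Real.sin z := by
    intro A B hs
    apply const_of_hasDeriv_zero_Ioo
    intro y hy
    have h1 : HasDerivAt (fun t => f t / Real.sin t)
        ((deriv f y * Real.sin y - f y * Real.cos y) / Real.sin y ^ 2) y :=
      ((hf1 y).hasDerivAt).div (Real.hasDerivAt_sin y) (hs y hy)
    rw [hw y] at h1
    simpa using h1
  have hs1 : ∀ y ∈ Ioo (0:ℝ) π, Real.sin y ≠ 0 := fun y hy => (Real.sin_pos_of_pos_of_lt_pi hy.1 hy.2).ne'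
  have hs2 : ∀ y ∈ Ioo π (2*π), Real.sin y < 0 := by
    intro y hy
    have h := Real.sin_neg_of_neg_of_neg_pi_lt (x := y - 2*π) (by linarith [hy.2]) (by linarith [hy.1])
    rwa [Real.sin_sub_two_pi] at h
  -- the two constants
  set c₁ : ℝ := f (π/2) with hc₁
  set c₂ : ℝ := -f (3*π/2) with hc₂
  have hmem1 : (π/2 : ℝ) ∈ Ioo (0:ℝ) π := ⟨by linarith, by linarith⟩
  have hmem2 : (3*π/2 : ℝ) ∈ Ioo π (2*π) := ⟨by linarith, by linarith⟩
  have hf_on1 : ∀ y ∈ Ioo (0:ℝ) π, f y = c₁ * Real.sin y := by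
    intro y hy
    have hsy := hs1 y hy
    have h' : f y / Real.sin y = c₁ := by
      rw [key 0 π hs1 y hy (π/2) hmem1, Real.sin_pi_div_two]; simp [hc₁]
    rw [div_eq_iff hsy] at h'
    exact h'
  have hf_on2 : ∀ y ∈ Ioo π (2*π), f y = c₂ * Real.sin y := by
    intro y hy
    have h32 : Real.sin (3*π/2) = -1 := by
      rw [show (3*π/2 : ℝ) = π + π/2 by ring, Real.sin_add]; simp
    have hsy := (hs2 y hy).ne
    have h' : f y / Real.sin y = c₂ := by
      rw [key π (2*π) (fun z hz => (hs2 z hz).ne) y hy (3*π/2) hmem2, h32, hc₂]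
      field_simp
    rw [div_eq_iff hsy] at h'
    exact h'
  -- derivative of f on the open intervals
  have hderiv_on : ∀ (c A B : ℝ), (∀ y ∈ Ioo A B, f y = c * Real.sin y) →
      ∀ y ∈ Ioo A B, deriv f y = c * Real.cos y := by
    intro c A B hfc y hy
    have hev : f =ᶠ[𝓝 y] fun t => c * Real.sin t :=
      eventually_of_mem (isOpen_Ioo.mem_nhds hy) hfc
    rw [hev.deriv_eq]
    exact ((Real.hasDerivAt_sin y).const_mul c).deriv
  -- gluing at π
  have hglue : ∀ (c A B : ℝ), A < π → π ≤ B → (∀ y ∈ Ioo A B, deriv f y = c * Real.cos y) →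
      deriv f π = -c := by
    intro c A B hA hB hd
    have hclos : π ∈ closure (Ioo A π) := by
      rw [closure_Ioo hA.ne]; exact ⟨le_of_lt hA, le_rfl⟩
    have hne : (𝓝[Ioo A π] π).NeBot := mem_closure_iff_nhdsWithin_neBot.mp hclos
    have T1 : Tendsto (deriv f) (𝓝[Ioo A π] π) (𝓝 (deriv f π)) :=
      (hf2.continuousAt).continuousWithinAt
    have T2 : Tendsto (deriv f) (𝓝[Ioo A π] π) (𝓝 (c * Real.cos π)) := by
      apply Tendsto.congr' _ (((continuous_const.mul Real.continuous_cos).tendsto π).mono_left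
        nhdsWithin_le_nhds)
      filter_upwards [self_mem_nhdsWithin] with z hz
      exact (hd z ⟨hz.1, lt_of_lt_of_le hz.2 hB⟩).symm
    have := tendsto_nhds_unique T1 T2
    rw [this, Real.cos_pi]; ring
  have hglue2 : ∀ (c B : ℝ), π < B → (∀ y ∈ Ioo π B, deriv f y = c * Real.cos y) →
      deriv f π = -c := by
    intro c B hB hd
    have hclos : π ∈ closure (Ioo π B) := by
      rw [closure_Ioo hB.ne]; exact ⟨le_rfl, le_of_lt hB⟩
    have hne : (𝓝[Ioo π B] π).NeBot := mem_closure_iff_nhdsWithin_neBot.mp hclos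
    have T1 : Tendsto (deriv f) (𝓝[Ioo π B] π) (𝓝 (deriv f π)) :=
      (hf2.continuousAt).continuousWithinAt
    have T2 : Tendsto (deriv f) (𝓝[Ioo π B] π) (𝓝 (c * Real.cos π)) := by
      apply Tendsto.congr' _ (((continuous_const.mul Real.continuous_cos).tendsto π).mono_left
        nhdsWithin_le_nhds)
      filter_upwards [self_mem_nhdsWithin] with z hz
      exact (hd z hz).symm
    have := tendsto_nhds_unique T1 T2
    rw [this, Real.cos_pi]; ring
  have hd1 : deriv f π = -c₁ := hglue c₁ 0 π hpi le_rfl (hderiv_on c₁ 0 π hf_on1)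
  have hd2 : deriv f π = -c₂ := hglue2 c₂ (2*π) (by linarith) (hderiv_on c₂ π (2*π) hf_on2)
  have hcc : c₁ = c₂ := by linarith [hd1, hd2]
  -- boundary values
  have hf0 : f 0 = 0 := by have := hw 0; simpa using this
  have hfπ : f π = 0 := by have := hw π; simp [Real.sin_pi, Real.cos_pi] at this; linarith
  -- on Ico 0 (2π)
  have hIco : ∀ y ∈ Ico (0:ℝ) (2*π), f y = c₁ * Real.sin y := by
    intro y hy
    rcases eq_or_lt_of_le hy.1 with h0 | h0
    · rw [← h0]; simp [hf0]
    rcases lt_trichotomy y π with h1 | h1 | h1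
    · exact hf_on1 y ⟨h0, h1⟩
    · rw [h1]; simp [hfπ]
    · rw [hcc]; exact hf_on2 y ⟨h1, hy.2⟩
  refine ⟨c₁, fun x => ?_⟩
  have hg : Function.Periodic (fun y => f y - c₁ * Real.sin y) (2*π) := by
    intro y; simp [hper y, Real.sin_add_two_pi]
  obtain ⟨y, hy, hxy⟩ := hg.exists_mem_Ico₀ (by linarith) x
  have := hIco y hy
  simp only [this, sub_self] at hxy
  linarith [hxy]


lemma isSol_comb {a b : ℝ} {f g : ℝ → ℝ} (c d : ℝ)
    (hf : ContDiff ℝ 2 f) (hg : ContDiff ℝ 2 g) (hsf : IsSol a b f) (hsg : IsSol a b g) :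
    IsSol a b (fun y => c * f y + d * g y) := by
  obtain ⟨hf1, hf2, -⟩ := aux_deriv hf
  obtain ⟨hg1, hg2, -⟩ := aux_deriv hg
  have hd1 : deriv (fun y => c * f y + d * g y) = fun y => c * deriv f y + d * deriv g y := by
    funext y
    rw [deriv_fun_add ((hf1 y).const_mul c) ((hg1 y).const_mul d),
      deriv_const_mul c (hf1 y), deriv_const_mul d (hg1 y)]
  intro y
  rw [hd1]
  have hd2 : deriv (fun y => c * deriv f y + d * deriv g y) y
      = c * deriv (deriv f) y + d * deriv (deriv g) y := by
    rw [deriv_fun_add ((hf2 y).const_mul c) ((hg2 y).const_mul d),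
      deriv_const_mul c (hf2 y), deriv_const_mul d (hg2 y)]
  rw [hd2]
  linear_combination c * hsf y + d * hsg y

lemma isSol_neg {a b : ℝ} {f : ℝ → ℝ} (hf : ContDiff ℝ 2 f) (hs : IsSol a b f) :
    IsSol a b (fun y => f (-y)) := by
  obtain ⟨hf1, hf2, -⟩ := aux_deriv hf
  have hd1 : deriv (fun y => f (-y)) = fun y => -deriv f (-y) := by
    funext y; exact deriv_comp_neg f y
  intro y
  rw [hd1]
  have hd2 : deriv (fun y => -deriv f (-y)) y = deriv (deriv f) (-y) := by
    rw [show (fun y => -deriv f (-y)) = fun y => -(fun t => deriv f (-t)) y by rfl, deriv.fun_neg,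
      deriv_comp_neg]; ring
  rw [hd2]
  have h := hs (-y)
  simp only [Real.sin_neg, Real.cos_neg, pf_even] at h
  linear_combination h

lemma cos_ode {a b : ℝ} (ha : 0 < a) (hb : 0 < b) (y : ℝ) :
    ((b - 2 * (b + (a - b) * Real.cos y ^ 2)) / pf a b y) * Real.cos y
      + (-(a - b) * Real.sin y * Real.cos y / pf a b y) * Real.sin y + pf a b y * Real.cos y
    = -(a - b) * Real.cos y / pf a b y := by
  have hp := (pf_pos ha hb y).ne'
  have hp2 := pf_sq ha hb y
  have hsc := Real.sin_sq_add_cos_sq y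
  field_simp
  linear_combination (Real.cos y) * hp2 - ((a - b) * Real.cos y) * hsc

lemma hasDerivAt_Z {a b : ℝ} (ha : 0 < a) (hb : 0 < b) {u : ℝ → ℝ}
    (hu : ContDiff ℝ 2 u) (hs : IsSol a b u) (y : ℝ) :
    HasDerivAt (fun t => pf a b t * (deriv u t * Real.cos t + u t * Real.sin t))
      (-(a - b) * (u y * Real.cos y / pf a b y)) y := by
  obtain ⟨h1, h2, -⟩ := aux_deriv hu
  have hin : HasDerivAt (fun t => deriv u t * Real.cos t + u t * Real.sin t)
      ((deriv (deriv u) y * Real.cos y + deriv u y * (-Real.sin y))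
        + (deriv u y * Real.sin y + u y * Real.cos y)) y :=
    ((h2 y).hasDerivAt.mul (Real.hasDerivAt_cos y)).add
      ((h1 y).hasDerivAt.mul (Real.hasDerivAt_sin y))
  have h := (hasDerivAt_pf ha hb y).mul hin
  refine h.congr_deriv (Eq.symm ?_)
  linear_combination (-Real.cos y) * hs y + (-(u y)) * cos_ode ha hb y

end MultAux

open MultAux Set Filter Topology in
/-- For `m ≠ k`, the eigenvalue `λ = 2` of the periodic Sturm–Liouville problem with `l = k`
has multiplicity one: every `C²` `2π`-periodic solution is a constant multiple of `sin y`. -/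
theorem multiplicity_one_sin (m k : ℕ) (hm : 0 < m) (hk : 0 < k) (hmk : m ≠ k)
    (p : ℝ → ℝ)
    (hp : ∀ y : ℝ, p y = Real.sqrt ((k : ℝ) ^ 2 + ((m : ℝ) ^ 2 - (k : ℝ) ^ 2) * Real.cos y ^ 2))
    (φ : ℝ → ℝ) (hφ : ContDiff ℝ 2 φ)
    (hper : ∀ y : ℝ, φ (y + 2 * π) = φ y)
    (heq : ∀ y : ℝ,
      -(1 / p y) * deriv (fun y' => p y' * deriv φ y') y
        + ((k : ℝ) ^ 2 / (p y) ^ 2 - 2) * φ y = 0) :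
    ∃ c : ℝ, ∀ y : ℝ, φ y = c * Real.sin y := by
  have hpi := Real.pi_pos
  have ha : (0:ℝ) < (m:ℝ)^2 := by positivity
  have hb : (0:ℝ) < (k:ℝ)^2 := by positivity
  have hab : ((m:ℝ)^2 : ℝ) ≠ (k:ℝ)^2 := by
    have hmk' : (m:ℝ) ≠ (k:ℝ) := by exact_mod_cast hmk
    intro h
    rcases hmk'.lt_or_gt with h' | h'
    · have h0 : (0:ℝ) ≤ (m:ℝ) := Nat.cast_nonneg m
      nlinarith
    · have h0 : (0:ℝ) ≤ (k:ℝ) := Nat.cast_nonneg k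
      nlinarith
  set a : ℝ := (m:ℝ)^2 with hadef
  set b : ℝ := (k:ℝ)^2 with hbdef
  have hpe : p = pf a b := funext fun y => hp y
  subst hpe
  obtain ⟨hφ1, hφ2, -⟩ := aux_deriv hφ
  -- φ is a solution
  have hsolφ : IsSol a b φ := by
    intro y
    have hpne := (pf_pos ha hb y).ne'
    have hp2 := pf_sq ha hb y
    have hD : HasDerivAt (fun t => pf a b t * deriv φ t)
        ((-(a - b) * Real.sin y * Real.cos y / pf a b y) * deriv φ y
          + pf a b y * deriv (deriv φ) y) y :=
      (hasDerivAt_pf ha hb y).mul ((hφ2 y).hasDerivAt)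
    have h := heq y
    rw [hD.deriv] at h
    have hinv : pf a b y * (1 / pf a b y) = 1 := by field_simp
    linear_combination (-(pf a b y)) * h
      + (-(-(a - b) * Real.sin y * Real.cos y / pf a b y * deriv φ y
          + pf a b y * deriv (deriv φ) y) + b * φ y / pf a b y + 2 * pf a b y * φ y) * hinv
      + (-(2 * φ y / pf a b y)) * hp2
  -- periodicity helper
  have hperf : Function.Periodic φ (2*π) := hper
  -- odd part is a multiple of sin
  have hneg_cd : ContDiff ℝ 2 (fun y => φ (-y)) := hφ.comp contDiff_neg
  have hneg_sol : IsSol a b (fun y => φ (-y)) := isSol_neg hφ hsolφ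
  set χo : ℝ → ℝ := fun y => (1/2) * φ y + (-(1/2)) * φ (-y) with hχo
  set χ : ℝ → ℝ := fun y => (1/2) * φ y + (1/2) * φ (-y) with hχ
  have hχo_cd : ContDiff ℝ 2 χo := (contDiff_const.mul hφ).add (contDiff_const.mul hneg_cd)
  have hχ_cd : ContDiff ℝ 2 χ := (contDiff_const.mul hφ).add (contDiff_const.mul hneg_cd)
  have hχo_sol : IsSol a b χo := isSol_comb _ _ hφ hneg_cd hsolφ hneg_sol
  have hχ_sol : IsSol a b χ := isSol_comb _ _ hφ hneg_cd hsolφ hneg_sol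
  have hχ_per : ∀ y, χ (y + 2*π) = χ y := by
    intro y
    have h1 : φ (-(y + 2*π)) = φ (-y) := by
      rw [show -(y + 2*π) = -y - 2*π by ring]; exact hperf.sub_eq (-y)
    simp only [hχ, hper y, h1]
  have hχo_per : ∀ y, χo (y + 2*π) = χo y := by
    intro y
    have h1 : φ (-(y + 2*π)) = φ (-y) := by
      rw [show -(y + 2*π) = -y - 2*π by ring]; exact hperf.sub_eq (-y)
    simp only [hχo, hper y, h1]
  have hχ_even : ∀ y, χ (-y) = χ y := by intro y; simp only [hχ, neg_neg]; ring
  -- zero Wronskian criterion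
  have hMS : ∀ f : ℝ → ℝ, ContDiff ℝ 2 f → (∀ y, f (y + 2*π) = f y) →
      (∀ y, pf a b y * (deriv f y * Real.sin y - f y * Real.cos y) = 0) →
      ∃ c, ∀ y, f y = c * Real.sin y := by
    intro f hf hfper hfw
    obtain ⟨h1, h2, -⟩ := aux_deriv hf
    apply multiple_of_sin h1 h2.continuous hfper
    intro y
    have := hfw y
    rcases mul_eq_zero.mp this with h | h
    · exact absurd h (pf_pos ha hb y).ne'
    · exact h
  -- odd part
  have hχo0 : χo 0 = 0 := by simp [hχo]
  have hχoW : ∀ y, pf a b y * (deriv χo y * Real.sin y - χo y * Real.cos y) = 0 := by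
    intro y
    rw [wronskian_eq ha hb hχo_cd hχo_sol y, hχo0]
    ring
  obtain ⟨c, hc⟩ := hMS χo hχo_cd hχo_per hχoW
  -- decomposition
  have hdecomp : ∀ y, φ y = χ y + χo y := by intro y; simp only [hχ, hχo]; ring
  -- now show χ ≡ 0
  rcases eq_or_ne (χ 0) 0 with hz | hz
  · -- easy case
    have hχW : ∀ y, pf a b y * (deriv χ y * Real.sin y - χ y * Real.cos y) = 0 := by
      intro y
      rw [wronskian_eq ha hb hχ_cd hχ_sol y, hz]
      ring
    obtain ⟨c', hc'⟩ := hMS χ hχ_cd hχ_per hχW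
    have hc'0 : c' = 0 := by
      have h1 := hc' (π/2)
      have h2 := hc' (-(π/2))
      rw [hχ_even (π/2), h1] at h2
      simp [Real.sin_pi_div_two] at h2 ⊢
      linarith
    refine ⟨c, fun y => ?_⟩
    rw [hdecomp y, hc' y, hc'0, hc y]; ring
  · -- hard case : even periodic solution with χ 0 ≠ 0 leads to a contradiction
    exfalso
    set u : ℝ → ℝ := fun y => (1/(χ 0)) * χ y + 0 * χ y with hu
    have hu_cd : ContDiff ℝ 2 u := (contDiff_const.mul hχ_cd).add (contDiff_const.mul hχ_cd)
    have hu_sol : IsSol a b u := isSol_comb _ _ hχ_cd hχ_cd hχ_sol hχ_sol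
    obtain ⟨hu1, hu2, -⟩ := aux_deriv hu_cd
    have hu0 : u 0 = 1 := by simp [hu]; field_simp
    have hu_even : ∀ y, u (-y) = u y := by intro y; simp only [hu, hχ_even y]
    have hu_per : ∀ y, u (y + 2*π) = u y := by intro y; simp only [hu, hχ_per y]
    have huperf : Function.Periodic u (2*π) := hu_per
    have hsa : (0:ℝ) < Real.sqrt a := Real.sqrt_pos.mpr ha
    have hW : ∀ y, pf a b y * (deriv u y * Real.sin y - u y * Real.cos y) = -Real.sqrt a := by
      intro y
      rw [wronskian_eq ha hb hu_cd hu_sol y, hu0]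
      ring
    -- u π = -1
    have huπ : u π = -1 := by
      have h := hW π
      rw [pf_pi, Real.sin_pi, Real.cos_pi] at h
      have h2 : Real.sqrt a * u π = Real.sqrt a * (-1) := by linear_combination h
      exact mul_left_cancel₀ hsa.ne' h2
    -- deriv u is odd
    have hu'odd : ∀ y, deriv u y = -deriv u (-y) := by
      intro y
      have : u = fun t => u (-t) := funext fun t => (hu_even t).symm
      conv_lhs => rw [this]
      rw [deriv_comp_neg]
    have hu'0 : deriv u 0 = 0 := by have := hu'odd 0; simp at this; linarith
    -- reflection symmetry : u (π - y) = - u y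
    set g : ℝ → ℝ := fun y => u (π - y) + u y with hg
    have hg_deriv : ∀ y, deriv g y = -deriv u (π - y) + deriv u y := by
      intro y
      have hd : DifferentiableAt ℝ (fun t => u (π - t)) y := by
        have : (fun t => u (π - t)) = u ∘ (fun t => π - t) := rfl
        rw [this]
        exact (hu1 _).comp y ((differentiable_const π).differentiableAt.sub differentiableAt_id)
      rw [hg, deriv_fun_add hd (hu1 y), deriv_comp_const_sub]
    have hg_cd : ContDiff ℝ 2 g :=
      (hu_cd.comp (contDiff_const.sub contDiff_id)).add hu_cd
    have hg_per : ∀ y, g (y + 2*π) = g y := by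
      intro y
      have h1 : u (π - (y + 2*π)) = u (π - y) := by
        rw [show π - (y + 2*π) = (π - y) - 2*π by ring]; exact huperf.sub_eq (π - y)
      simp only [hg, h1, hu_per y]
    have hgW : ∀ y, pf a b y * (deriv g y * Real.sin y - g y * Real.cos y) = 0 := by
      intro y
      have hA := hW y
      have hB := hW (π - y)
      rw [pf_refl, Real.sin_pi_sub, Real.cos_pi_sub] at hB
      rw [hg_deriv y]
      simp only [hg]
      linear_combination hA - hB
    obtain ⟨α, hα⟩ := hMS g hg_cd hg_per hgW
    have hg_even : ∀ y, g (-y) = g y := by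
      intro y
      have h1 : u (π + y) = u (π - y) := by
        have e1 : u (π + y) = u ((π + y) - 2*π) := (huperf.sub_eq (π + y)).symm
        rw [e1, show (π + y) - 2*π = -(π - y) by ring, hu_even]
      simp only [hg, show π - -y = π + y by ring, h1, hu_even y]
    have hα0 : α = 0 := by
      have h1 := hα (π/2)
      have h2 := hα (-(π/2))
      rw [hg_even (π/2), h1] at h2
      simp [Real.sin_pi_div_two, Real.sin_neg] at h2
      linarith
    have huhalf : u (π/2) = 0 := by
      have h := hα (π/2)
      rw [hα0, zero_mul] at h
      simp only [hg] at h
      rw [show π - π/2 = π/2 by ring] at h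
      linarith
    -- derivative at zeros of u in (0, π) is negative
    have hderiv_neg : ∀ z ∈ Ioo (0:ℝ) π, u z = 0 → deriv u z < 0 := by
      intro z hz hz0
      have h := hW z
      rw [hz0] at h
      have hsz : 0 < Real.sin z := Real.sin_pos_of_pos_of_lt_pi hz.1 hz.2
      have hpz : 0 < pf a b z := pf_pos ha hb z
      nlinarith [h, mul_pos hpz hsz, hsa]
    -- no zeros of u in (0, π/2)
    have hno_zero : ∀ z ∈ Ioo (0:ℝ) (π/2), u z ≠ 0 := by
      intro z hz hz0
      have hzΙ : z ∈ Ioo (0:ℝ) π := ⟨hz.1, by linarith [hz.2]⟩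
      have hdz : deriv u z < 0 := hderiv_neg z hzΙ hz0
      -- pick y₁ ∈ (z, π/2) with u y₁ < 0
      have hev := neg_right_of_deriv_neg ((hu1 z).hasDerivAt) hz0 hdz
      have hmem : Ioo z (π/2) ∈ 𝓝[>] z := Ioo_mem_nhdsGT_of_mem ⟨le_rfl, hz.2⟩
      obtain ⟨y₁, hy₁neg, hy₁mem⟩ := (hev.and (eventually_of_mem hmem (fun t ht => ht))).exists
      -- the least zero of u in [y₁, π/2]
      set S : Set ℝ := Icc y₁ (π/2) ∩ u ⁻¹' {0} with hS
      have hS_closed : IsClosed S :=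
        isClosed_Icc.inter (isClosed_singleton.preimage hu_cd.continuous)
      have hS_ne : S.Nonempty := ⟨π/2, ⟨hy₁mem.2.le, le_rfl⟩, huhalf⟩
      have hS_bdd : BddBelow S := ⟨y₁, fun x hx => hx.1.1⟩
      set t := sInf S with ht
      have htS : t ∈ S := hS_closed.csInf_mem hS_ne hS_bdd
      have hty₁ : y₁ < t := by
        rcases lt_or_eq_of_le htS.1.1 with h | h
        · exact h
        · exfalso; rw [h] at hy₁neg; rw [htS.2] at hy₁neg; exact lt_irrefl 0 hy₁neg
      have hneg_on : ∀ y ∈ Ico y₁ t, u y < 0 := by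
        intro y hy
        rcases lt_trichotomy (u y) 0 with h | h | h
        · exact h
        · exfalso
          have : y ∈ S := ⟨⟨hy.1, le_trans hy.2.le htS.1.2⟩, h⟩
          exact absurd (csInf_le hS_bdd this) (not_le.mpr hy.2)
        · exfalso
          have hcont : ContinuousOn u (Icc y₁ y) := hu_cd.continuous.continuousOn
          have h0mem : (0:ℝ) ∈ Ioo (u y₁) (u y) := ⟨hy₁neg, h⟩
          obtain ⟨w, hw, hw0⟩ := intermediate_value_Ioo hy.1 hcont h0mem
          have : w ∈ S := ⟨⟨hw.1.le, le_trans (le_trans hw.2.le hy.2.le) htS.1.2⟩, hw0⟩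
          exact absurd (csInf_le hS_bdd this) (not_le.mpr (lt_trans hw.2 hy.2))
      have htΙ : t ∈ Ioo (0:ℝ) π := ⟨by linarith [hy₁mem.1, hz.1], by linarith [htS.1.2]⟩
      have hdt : deriv u t < 0 := hderiv_neg t htΙ htS.2
      have hev2 := pos_left_of_deriv_neg ((hu1 t).hasDerivAt) htS.2 hdt
      have hmem2 : Ioo y₁ t ∈ 𝓝[<] t := Ioo_mem_nhdsLT_of_mem ⟨hty₁, le_rfl⟩
      obtain ⟨w, hwpos, hwmem⟩ := (hev2.and (eventually_of_mem hmem2 (fun v hv => hv))).exists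
      exact absurd hwpos (not_lt.mpr (hneg_on w ⟨hwmem.1.le, hwmem.2⟩).le)
    -- u > 0 on (0, π/2)
    have hpos : ∀ y ∈ Ioo (0:ℝ) (π/2), 0 < u y := by
      intro y hy
      rcases lt_trichotomy (u y) 0 with h | h | h
      · exfalso
        have hcont : ContinuousOn u (Icc 0 y) := hu_cd.continuous.continuousOn
        have h0mem : (0:ℝ) ∈ Ioo (u y) (u 0) := by rw [hu0]; exact ⟨h, one_pos⟩
        obtain ⟨w, hw, hw0⟩ := intermediate_value_Ioo' hy.1.le hcont h0mem
        exact hno_zero w ⟨hw.1, lt_trans hw.2 hy.2⟩ hw0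
      · exact absurd h (hno_zero y hy)
      · exact h
    -- the integral identity
    set Z : ℝ → ℝ := fun t => pf a b t * (deriv u t * Real.cos t + u t * Real.sin t) with hZ
    have hZd : ∀ t, HasDerivAt Z (-(a - b) * (u t * Real.cos t / pf a b t)) t :=
      fun t => hasDerivAt_Z ha hb hu_cd hu_sol t
    have hZ0 : Z 0 = 0 := by simp [hZ, pf_zero, hu'0]
    have hZhalf : Z (π/2) = 0 := by
      simp [hZ, pf_half, huhalf, Real.cos_pi_div_two]
    have hInt_cont : Continuous (fun t => u t * Real.cos t / pf a b t) :=
      (hu_cd.continuous.mul Real.continuous_cos).div pf_cont (fun t => (pf_pos ha hb t).ne')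
    have hFTC : ∫ t in (0:ℝ)..(π/2), (-(a - b) * (u t * Real.cos t / pf a b t)) = 0 := by
      rw [intervalIntegral.integral_eq_sub_of_hasDerivAt (fun t _ => hZd t)
        ((continuous_const.mul hInt_cont).intervalIntegrable _ _), hZhalf, hZ0, sub_zero]
    have hIpos : 0 < ∫ t in (0:ℝ)..(π/2), u t * Real.cos t / pf a b t := by
      apply intervalIntegral.intervalIntegral_pos_of_pos_on
        (hInt_cont.intervalIntegrable _ _)
      · intro x hx
        have hcos : 0 < Real.cos x := Real.cos_pos_of_mem_Ioo ⟨by linarith [hx.1], hx.2⟩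
        exact div_pos (mul_pos (hpos x hx) hcos) (pf_pos ha hb x)
      · linarith
    rw [intervalIntegral.integral_const_mul] at hFTC
    have : -(a - b) = 0 := by
      rcases mul_eq_zero.mp hFTC with h | h
      · exact h
      · exact absurd h hIpos.ne'
    apply hab
    linarith [this]
end

section
/- Let m and k be positive integers with m ≠ k, let p(y) = √(k² + (m² − k²)cos²y), and define F : (−π/2, π/2) → ℝ by F(y) = cos y · ∫₀^y dξ / (cos²ξ · √(k² + (m² − k²)cos²ξ)). Then F satisfies the Sturm–Liouville equation −(1/p(y))(p(y)F'(y))' + (m²/p(y)² − 2)F(y) = 0 on (−π/2, π/2), and its Wronskian with cos y satisfies p(y)·(cos y · F'(y) + sin y · F(y)) = 1 for all y ∈ (−π/2, π/2); in particular F and cos y are linearly independent solutions on this interval. -/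
open Real

/-- The function `F(y) = cos y · ∫₀^y dξ/(cos²ξ √(k² + (m² − k²)cos²ξ))` is a second solution
of the Sturm–Liouville equation with `l = m`, `λ = 2` on `(−π/2, π/2)`, and its Wronskian with
`cos y` satisfies `p·(cos y · F' + sin y · F) = 1`; in particular `F` and `cos` are linearly
independent solutions on this interval. -/
theorem second_solution_F (m k : ℕ) (hm : 0 < m) (hk : 0 < k) (hmk : m ≠ k)
    (p : ℝ → ℝ)
    (hp : ∀ y : ℝ, p y = Real.sqrt ((k : ℝ) ^ 2 + ((m : ℝ) ^ 2 - (k : ℝ) ^ 2) * Real.cos y ^ 2))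
    (F : ℝ → ℝ)
    (hF : ∀ y : ℝ, F y = Real.cos y *
      ∫ ξ in (0 : ℝ)..y, 1 / (Real.cos ξ ^ 2 *
        Real.sqrt ((k : ℝ) ^ 2 + ((m : ℝ) ^ 2 - (k : ℝ) ^ 2) * Real.cos ξ ^ 2))) :
    ∀ y ∈ Set.Ioo (-(π / 2)) (π / 2),
      (-(1 / p y) * deriv (fun y' => p y' * deriv F y') y
        + ((m : ℝ) ^ 2 / (p y) ^ 2 - 2) * F y = 0) ∧
      p y * (Real.cos y * deriv F y + Real.sin y * F y) = 1 := by
  have hm1 : (1:ℝ) ≤ (m:ℝ) := by exact_mod_cast hm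
  have hk1 : (1:ℝ) ≤ (k:ℝ) := by exact_mod_cast hk
  set c : ℝ := (m:ℝ)^2 - (k:ℝ)^2 with hc
  have hin_pos : ∀ y : ℝ, 0 < (k:ℝ)^2 + c * Real.cos y ^ 2 := by
    intro y
    have h1 : (1:ℝ) ≤ (k:ℝ)^2 := by nlinarith
    have h2 : (1:ℝ) ≤ (m:ℝ)^2 := by nlinarith
    rw [hc]
    nlinarith [Real.sin_sq_add_cos_sq y, sq_nonneg (Real.sin y), sq_nonneg (Real.cos y)]
  set q : ℝ → ℝ := fun y => Real.sqrt ((k:ℝ)^2 + c * Real.cos y ^ 2) with hqdef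
  have hq_pos : ∀ y, 0 < q y := fun y => Real.sqrt_pos.mpr (hin_pos y)
  have hq_sq : ∀ y, q y ^ 2 = (k:ℝ)^2 + c * Real.cos y ^ 2 :=
    fun y => Real.sq_sqrt (hin_pos y).le
  have hq_deriv : ∀ y, HasDerivAt q (-(c * Real.sin y * Real.cos y) / q y) y := by
    intro y
    have h1 : HasDerivAt (fun y => (k:ℝ)^2 + c * Real.cos y ^ 2)
        (c * (2 * Real.cos y ^ 1 * (-Real.sin y))) y := by
      exact (((Real.hasDerivAt_cos y).pow 2).const_mul c).const_add ((k:ℝ)^2)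
    have h2 := h1.sqrt (ne_of_gt (hin_pos y))
    convert h2 using 1
    rw [hqdef]
    field_simp
  set g : ℝ → ℝ := fun ξ => 1 / (Real.cos ξ ^ 2 * q ξ) with hgdef
  have hq_cont : Continuous q := by
    apply Real.continuous_sqrt.comp
    continuity
  have hg_cont : ContinuousOn g (Set.Ioo (-(π/2)) (π/2)) := by
    apply ContinuousOn.div continuousOn_const
    · exact ((Real.continuous_cos.pow 2).continuousOn.mul hq_cont.continuousOn)
    · intro x hx
      have hcx : 0 < Real.cos x := Real.cos_pos_of_mem_Ioo hx
      exact (mul_pos (pow_pos hcx 2) (hq_pos x)).ne'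
  set I : ℝ → ℝ := fun y => ∫ ξ in (0:ℝ)..y, g ξ with hIdef
  have hFeq : ∀ y, F y = Real.cos y * I y := fun y => hF y
  have h0mem : (0:ℝ) ∈ Set.Ioo (-(π/2)) (π/2) := by
    constructor <;> [linarith [Real.pi_pos]; linarith [Real.pi_pos]]
  have hI_deriv : ∀ z ∈ Set.Ioo (-(π/2)) (π/2), HasDerivAt I (g z) z := by
    intro z hz
    have hsub : Set.uIcc (0:ℝ) z ⊆ Set.Ioo (-(π/2)) (π/2) :=
      Set.OrdConnected.uIcc_subset Set.ordConnected_Ioo h0mem hz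
    have hInt : IntervalIntegrable g MeasureTheory.volume 0 z :=
      (hg_cont.mono hsub).intervalIntegrable
    exact intervalIntegral.integral_hasDerivAt_right hInt
      (hg_cont.stronglyMeasurableAtFilter isOpen_Ioo z hz)
      (hg_cont.continuousAt (isOpen_Ioo.mem_nhds hz))
  have hF_deriv : ∀ z ∈ Set.Ioo (-(π/2)) (π/2),
      HasDerivAt F (-Real.sin z * I z + Real.cos z * g z) z := by
    intro z hz
    have : HasDerivAt (fun y => Real.cos y * I y)
        (-Real.sin z * I z + Real.cos z * g z) z :=
      (Real.hasDerivAt_cos z).mul (hI_deriv z hz)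
    exact this.congr_of_eventuallyEq (Filter.Eventually.of_forall fun y => (hFeq y))
  have hderivF : ∀ z ∈ Set.Ioo (-(π/2)) (π/2),
      deriv F z = -Real.sin z * I z + Real.cos z * g z :=
    fun z hz => (hF_deriv z hz).deriv
  intro y hy
  have hcy : 0 < Real.cos y := Real.cos_pos_of_mem_Ioo hy
  have hqy : 0 < q y := hq_pos y
  -- Wronskian part
  have hwr : p y * (Real.cos y * deriv F y + Real.sin y * F y) = 1 := by
    rw [hp, hderivF y hy, hFeq, hgdef]
    show q y * (Real.cos y * (-Real.sin y * I y + Real.cos y * (1 / (Real.cos y ^2 * q y)))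
      + Real.sin y * (Real.cos y * I y)) = 1
    field_simp
    ring
  refine ⟨?_, hwr⟩
  -- the function p * F' agrees with H near y
  set H : ℝ → ℝ := fun z => -(q z * Real.sin z * I z) + (Real.cos z)⁻¹ with hHdef
  have hev : (fun y' => p y' * deriv F y') =ᶠ[nhds y] H := by
    filter_upwards [isOpen_Ioo.mem_nhds hy] with z hz
    have hcz : 0 < Real.cos z := Real.cos_pos_of_mem_Ioo hz
    rw [hp, hderivF z hz, hHdef, hgdef]
    show q z * (-Real.sin z * I z + Real.cos z * (1 / (Real.cos z ^2 * q z)))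
      = -(q z * Real.sin z * I z) + (Real.cos z)⁻¹
    field_simp [hcz.ne', (hq_pos z).ne']
  have hH_deriv : HasDerivAt H
      ((-(c * Real.sin y * Real.cos y) / q y * Real.sin y + q y * Real.cos y) * I y
        + (q y * Real.sin y) * g y |> fun t => -t + (-(-Real.sin y) / Real.cos y ^ 2)) y := by
    exact ((((hq_deriv y).mul (Real.hasDerivAt_sin y)).mul (hI_deriv y hy)).neg).add
      ((Real.hasDerivAt_cos y).inv hcy.ne')
  have hDval : deriv (fun y' => p y' * deriv F y') y
      = -((-(c * Real.sin y * Real.cos y) / q y * Real.sin y + q y * Real.cos y) * I y) := by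
    rw [hev.deriv_eq, hH_deriv.deriv]
    have : q y * Real.sin y * g y = Real.sin y / Real.cos y ^ 2 := by
      rw [hgdef]
      show q y * Real.sin y * (1 / (Real.cos y ^ 2 * q y)) = Real.sin y / Real.cos y ^ 2
      field_simp
    simp only
    rw [this]
    ring
  rw [hDval, hp, hFeq]
  show -(1 / q y) * -((-(c * Real.sin y * Real.cos y) / q y * Real.sin y
      + q y * Real.cos y) * I y) + ((m:ℝ)^2 / q y ^ 2 - 2) * (Real.cos y * I y) = 0
  have hs := Real.sin_sq_add_cos_sq y
  have hq2 := hq_sq y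
  field_simp
  linear_combination (Real.cos y * I y) * (((k:ℝ)^2 - (m:ℝ)^2) * hs - hq2
    - Real.cos y ^ 2 * hc)
end

section
/- Let m and k be positive integers with m ≠ k, and define F : (−π/2, π/2) → ℝ by F(y) = cos y · ∫₀^y dξ / (cos²ξ · √(k² + (m² − k²)cos²ξ)). Then F(y) tends to 1/k as y tends to π/2 from the left. -/
open Real Filter

/-- The function `F(y) = cos y · ∫₀^y dξ/(cos²ξ √(k² + (m² − k²)cos²ξ))` tends to `1/k`
as `y → π/2` from the left. -/
theorem limit_of_F (m k : ℕ) (hm : 0 < m) (hk : 0 < k) (hmk : m ≠ k)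
    (F : ℝ → ℝ)
    (hF : ∀ y : ℝ, F y = Real.cos y *
      ∫ ξ in (0 : ℝ)..y, 1 / (Real.cos ξ ^ 2 *
        Real.sqrt ((k : ℝ) ^ 2 + ((m : ℝ) ^ 2 - (k : ℝ) ^ 2) * Real.cos ξ ^ 2))) :
    Tendsto F (nhdsWithin (π / 2) (Set.Iio (π / 2))) (nhds (1 / (k : ℝ))) := by
  have hK : (0:ℝ) < (k:ℝ) := by exact_mod_cast hk
  have hM : (0:ℝ) < (m:ℝ) := by exact_mod_cast hm
  set c : ℝ := (m:ℝ)^2 - (k:ℝ)^2 with hc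
  set q : ℝ → ℝ := fun ξ => (k:ℝ)^2 + c * Real.cos ξ ^ 2 with hq
  have hqpos : ∀ ξ, 0 < q ξ := by
    intro ξ
    have h1 : Real.sin ξ ^ 2 + Real.cos ξ ^ 2 = 1 := Real.sin_sq_add_cos_sq ξ
    have h2 : q ξ = (m:ℝ)^2 * Real.cos ξ^2 + (k:ℝ)^2 * Real.sin ξ^2 := by
      simp only [hq, hc]; nlinarith [h1]
    rcases le_total ((m:ℝ)^2) ((k:ℝ)^2) with hle|hle
    · nlinarith [sq_nonneg (Real.sin ξ), sq_nonneg (Real.cos ξ), mul_pos hM hM]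
    · nlinarith [sq_nonneg (Real.sin ξ), sq_nonneg (Real.cos ξ), mul_pos hK hK]
  have hsq : ∀ ξ, 0 < Real.sqrt (q ξ) := fun ξ => Real.sqrt_pos.mpr (hqpos ξ)
  have hsqsq : ∀ ξ, Real.sqrt (q ξ) ^ 2 = q ξ := fun ξ => Real.sq_sqrt (hqpos ξ).le
  set h : ℝ → ℝ := fun ξ => -c / ((k:ℝ) * Real.sqrt (q ξ) * ((k:ℝ) + Real.sqrt (q ξ))) with hh
  have hden : ∀ ξ, (0:ℝ) < (k:ℝ) * Real.sqrt (q ξ) * ((k:ℝ) + Real.sqrt (q ξ)) := by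
    intro ξ; have := hsq ξ; positivity
  have hqcont : Continuous q := by fun_prop
  have hcont_h : Continuous h := by
    apply Continuous.div continuous_const
    · fun_prop
    · exact fun ξ => (hden ξ).ne'
  -- the algebraic splitting
  have hsplit : ∀ ξ : ℝ, Real.cos ξ ≠ 0 →
      1 / (Real.cos ξ ^ 2 * Real.sqrt (q ξ)) =
        (1/(k:ℝ)) * (1 / Real.cos ξ ^ 2) + h ξ := by
    intro ξ hcos
    have hs := hsq ξ
    have hs2 := hsqsq ξ
    simp only [hh]
    field_simp
    have hq2 : q ξ = (k:ℝ)^2 + ((m:ℝ)^2 - (k:ℝ)^2) * Real.cos ξ^2 := by simp only [hq, hc]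
    linear_combination (-1:ℝ) * hs2 + (-1:ℝ) * hq2
  -- integrability on subintervals of (-π/2, π/2)
  have hIoo : ∀ y ∈ Set.Ioo (-(π/2)) (π/2), Set.uIcc (0:ℝ) y ⊆ Set.Ioo (-(π/2)) (π/2) := by
    intro y hy
    apply Set.ordConnected_Ioo.uIcc_subset _ hy
    constructor <;> linarith [Real.pi_pos]
  have key : ∀ y ∈ Set.Ioo (-(π/2)) (π/2),
      (∫ ξ in (0:ℝ)..y, 1 / (Real.cos ξ ^ 2 * Real.sqrt (q ξ)))
        = (1/(k:ℝ)) * Real.tan y + ∫ ξ in (0:ℝ)..y, h ξ := by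
    intro y hy
    have hsub := hIoo y hy
    have hcosne : ∀ ξ ∈ Set.uIcc (0:ℝ) y, Real.cos ξ ≠ 0 :=
      fun ξ hξ => (Real.cos_pos_of_mem_Ioo (hsub hξ)).ne'
    have hcont1 : ContinuousOn (fun ξ => (1/(k:ℝ)) * (1 / Real.cos ξ ^ 2)) (Set.uIcc (0:ℝ) y) := by
      apply ContinuousOn.mul continuousOn_const
      apply ContinuousOn.div continuousOn_const (by fun_prop)
      intro ξ hξ; exact pow_ne_zero _ (hcosne ξ hξ)
    have hint1 : IntervalIntegrable (fun ξ => (1/(k:ℝ)) * (1 / Real.cos ξ ^ 2))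
        MeasureTheory.volume 0 y := hcont1.intervalIntegrable
    have hint2 : IntervalIntegrable h MeasureTheory.volume 0 y :=
      hcont_h.intervalIntegrable 0 y
    rw [intervalIntegral.integral_congr
        (g := fun ξ => (1/(k:ℝ)) * (1 / Real.cos ξ ^ 2) + h ξ)
        (fun ξ hξ => hsplit ξ (hcosne ξ hξ)),
      intervalIntegral.integral_add hint1 hint2]
    congr 1
    have : ∀ ξ ∈ Set.uIcc (0:ℝ) y, HasDerivAt (fun t => (1/(k:ℝ)) * Real.tan t)
        ((1/(k:ℝ)) * (1 / Real.cos ξ ^ 2)) ξ :=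
      fun ξ hξ => (Real.hasDerivAt_tan (hcosne ξ hξ)).const_mul _
    rw [intervalIntegral.integral_eq_sub_of_hasDerivAt this hint1]
    simp
  -- eventual equality of F with the nice form
  have hmem : Set.Ioo (-(π/2)) (π/2) ∈ nhdsWithin (π/2) (Set.Iio (π/2)) := by
    rw [show Set.Ioo (-(π/2)) (π/2) = Set.Ioi (-(π/2)) ∩ Set.Iio (π/2) from rfl]
    exact Filter.inter_mem
      (nhdsWithin_le_nhds (Ioi_mem_nhds (by linarith [Real.pi_pos])))
      self_mem_nhdsWithin
  have heq : ∀ᶠ y in nhdsWithin (π/2) (Set.Iio (π/2)),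
      F y = Real.sin y * (1/(k:ℝ)) + Real.cos y * ∫ ξ in (0:ℝ)..y, h ξ := by
    filter_upwards [hmem] with y hy
    rw [hF y, key y hy]
    rw [Real.tan_eq_sin_div_cos]
    have hcos : Real.cos y ≠ 0 := (Real.cos_pos_of_mem_Ioo hy).ne'
    field_simp
  -- compute the limit of the nice form
  have hle : nhdsWithin (π/2) (Set.Iio (π/2)) ≤ nhds (π/2) := nhdsWithin_le_nhds
  have h1 : Tendsto (fun y => Real.sin y * (1/(k:ℝ)))
      (nhdsWithin (π/2) (Set.Iio (π/2))) (nhds (1/(k:ℝ))) := by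
    have := ((Real.continuous_sin.tendsto (π/2)).mono_left hle).mul_const (1/(k:ℝ))
    simpa [Real.sin_pi_div_two] using this
  have hprim : Continuous (fun y => ∫ ξ in (0:ℝ)..y, h ξ) :=
    intervalIntegral.continuous_primitive (fun a b => hcont_h.intervalIntegrable a b) 0
  have h2 : Tendsto (fun y => Real.cos y * ∫ ξ in (0:ℝ)..y, h ξ)
      (nhdsWithin (π/2) (Set.Iio (π/2))) (nhds 0) := by
    have := (((Real.continuous_cos.tendsto (π/2)).mono_left hle).mul
      ((hprim.tendsto (π/2)).mono_left hle))
    simpa [Real.cos_pi_div_two] using this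
  have := h1.add h2
  rw [add_zero] at this
  exact Tendsto.congr' (heq.mono fun _ e => e.symm) this
end

section
/- Let m and k be positive integers with m ≠ k, and define F : (−π/2, π/2) → ℝ by F(y) = cos y · ∫₀^y dξ / (cos²ξ · √(k² + (m² − k²)cos²ξ)). Then the derivative F'(y) tends, as y tends to π/2 from the left, to a finite nonzero limit Z. -/
open Real Filter Set intervalIntegral

/-- The derivative of `F(y) = cos y · ∫₀^y dξ/(cos²ξ √(k² + (m² − k²)cos²ξ))` tends to a
finite nonzero limit `Z` as `y → π/2` from the left. -/
theorem limit_of_F_deriv (m k : ℕ) (hm : 0 < m) (hk : 0 < k) (hmk : m ≠ k)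
    (F : ℝ → ℝ)
    (hF : ∀ y : ℝ, F y = Real.cos y *
      ∫ ξ in (0 : ℝ)..y, 1 / (Real.cos ξ ^ 2 *
        Real.sqrt ((k : ℝ) ^ 2 + ((m : ℝ) ^ 2 - (k : ℝ) ^ 2) * Real.cos ξ ^ 2))) :
    ∃ Z : ℝ, Z ≠ 0 ∧
      Tendsto (deriv F) (nhdsWithin (π / 2) (Set.Iio (π / 2))) (nhds Z) := by
  have hm1 : (1:ℝ) ≤ (m:ℝ) := by exact_mod_cast hm
  have hk1 : (1:ℝ) ≤ (k:ℝ) := by exact_mod_cast hk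
  set a : ℝ := (k:ℝ)^2 with ha_def
  set b : ℝ := (m:ℝ)^2 - (k:ℝ)^2 with hb_def
  have ha : 0 < a := by positivity
  have hb : b ≠ 0 := by
    rw [hb_def, sub_ne_zero]
    intro h
    have hmk' : (m:ℝ) = (k:ℝ) := by nlinarith
    exact hmk (by exact_mod_cast hmk')
  set q : ℝ → ℝ := fun y => a + b * Real.cos y ^ 2 with hq_def
  have hq : ∀ y, 0 < q y := by
    intro y
    have h2 : Real.cos y ^ 2 ≤ 1 := Real.cos_sq_le_one y
    have h3 : (0:ℝ) ≤ Real.cos y ^ 2 := sq_nonneg _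
    have ha1 : (1:ℝ) ≤ a := by nlinarith
    have hab1 : (1:ℝ) ≤ a + b := by rw [ha_def, hb_def]; nlinarith
    simp only [hq_def]
    nlinarith
  set p : ℝ → ℝ := fun y => Real.sqrt (q y) with hp_def
  have hp : ∀ y, 0 < p y := fun y => Real.sqrt_pos.2 (hq y)
  have hp2 : ∀ y, p y ^ 2 = q y := fun y => Real.sq_sqrt (hq y).le
  have hqc : Continuous q := by
    simp only [hq_def]; fun_prop
  have hpc : Continuous p := by
    simp only [hp_def]; exact Real.continuous_sqrt.comp hqc
  -- the auxiliary integrand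
  have hhc : Continuous (fun ξ => Real.cos ξ ^ 2 / p ξ) :=
    (Real.continuous_cos.pow 2).div hpc fun y => (hp y).ne'
  set C : ℝ → ℝ := fun y => ∫ ξ in (0:ℝ)..y, Real.cos ξ ^ 2 / p ξ with hC_def
  have hCd : ∀ y, HasDerivAt C (Real.cos y ^ 2 / p y) y := fun y =>
    intervalIntegral.integral_hasDerivAt_right (hhc.intervalIntegrable _ _)
      (hhc.stronglyMeasurableAtFilter _ _) hhc.continuousAt
  have hCc : Continuous C := continuous_iff_continuousAt.2 fun y => (hCd y).continuousAt
  -- derivative of p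
  set p' : ℝ → ℝ := fun y => -(b * Real.sin y * Real.cos y) / p y with hp'_def
  have hpd : ∀ y, HasDerivAt p (p' y) y := by
    intro y
    have h1 : HasDerivAt q (b * (2 * Real.cos y ^ 1 * (-Real.sin y))) y := by
      exact ((((Real.hasDerivAt_cos y).pow 2).const_mul b).const_add a).congr_deriv (by norm_num)
    have h2 := h1.sqrt (hq y).ne'
    convert h2 using 1
    simp only [hp'_def, hp_def]
    field_simp
  have hp'c : Continuous p' := by
    simp only [hp'_def]
    exact ((continuous_const.mul Real.continuous_sin).mul Real.continuous_cos).neg.div hpc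
      fun y => (hp y).ne'
  -- the antiderivative A
  set A : ℝ → ℝ := fun ξ => Real.sin ξ * p ξ / (a * Real.cos ξ) with hA_def
  have hA : ∀ ξ ∈ Ioo (-(π/2)) (π/2),
      HasDerivAt A (1 / (Real.cos ξ ^ 2 * p ξ) + (b/a) * (Real.cos ξ ^ 2 / p ξ)) ξ := by
    intro ξ hξ
    have hcos : 0 < Real.cos ξ := Real.cos_pos_of_mem_Ioo hξ
    have hN : HasDerivAt (fun ξ => Real.sin ξ * p ξ)
        (Real.cos ξ * p ξ + Real.sin ξ * p' ξ) ξ := (Real.hasDerivAt_sin ξ).mul (hpd ξ)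
    have hD : HasDerivAt (fun ξ => a * Real.cos ξ) (a * (-Real.sin ξ)) ξ :=
      (Real.hasDerivAt_cos ξ).const_mul a
    have hDne : a * Real.cos ξ ≠ 0 := by positivity
    have h : HasDerivAt A _ ξ := hN.div hD hDne
    convert h using 1
    have hpξ := (hp ξ).ne'
    have hq2 := hp2 ξ
    have hsc := Real.sin_sq_add_cos_sq ξ
    have hq2' : p ξ ^ 2 = a + b * Real.cos ξ ^ 2 := hp2 ξ
    simp only [hp'_def]
    field_simp
    linear_combination (-1 : ℝ) * hq2' + (b * Real.cos ξ^2 - p ξ^2) * hsc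
  -- the explicit form of F on the open interval
  set E : ℝ → ℝ := fun y => Real.sin y * p y / a - (b/a) * (Real.cos y * C y) with hE_def
  have hFE : ∀ y ∈ Ioo (-(π/2)) (π/2), F y = E y := by
    intro y hy
    have hsub : uIcc (0:ℝ) y ⊆ Ioo (-(π/2)) (π/2) := by
      apply Set.OrdConnected.uIcc_subset Set.ordConnected_Ioo
      · constructor <;> [linarith [pi_pos]; linarith [pi_pos]]
      · exact hy
    have hgcont : ContinuousOn (fun ξ => 1 / (Real.cos ξ ^ 2 * p ξ)) (uIcc 0 y) := by
      apply ContinuousOn.div continuousOn_const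
      · exact ((Real.continuous_cos.pow 2).mul hpc).continuousOn
      · intro ξ hξ
        have := Real.cos_pos_of_mem_Ioo (hsub hξ)
        have := hp ξ
        positivity
    have hgint : IntervalIntegrable (fun ξ => 1 / (Real.cos ξ ^ 2 * p ξ)) MeasureTheory.volume 0 y :=
      hgcont.intervalIntegrable
    have hhint : IntervalIntegrable (fun ξ => (b/a) * (Real.cos ξ ^ 2 / p ξ))
        MeasureTheory.volume 0 y := (continuous_const.mul hhc).intervalIntegrable _ _
    have hFTC : ∫ ξ in (0:ℝ)..y,
        (1 / (Real.cos ξ ^ 2 * p ξ) + (b/a) * (Real.cos ξ ^ 2 / p ξ)) = A y - A 0 := by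
      apply intervalIntegral.integral_eq_sub_of_hasDerivAt
      · exact fun ξ hξ => hA ξ (hsub hξ)
      · exact hgint.add hhint
    rw [intervalIntegral.integral_add hgint hhint] at hFTC
    have hCmul : ∫ ξ in (0:ℝ)..y, (b/a) * (Real.cos ξ ^ 2 / p ξ) = (b/a) * C y := by
      rw [hC_def]; exact intervalIntegral.integral_const_mul _ _
    have hA0 : A 0 = 0 := by simp [hA_def]
    have hI : (∫ ξ in (0:ℝ)..y, 1 / (Real.cos ξ ^ 2 * p ξ)) = A y - (b/a) * C y := by
      rw [hCmul, hA0] at hFTC; linarith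
    have hcos : 0 < Real.cos y := Real.cos_pos_of_mem_Ioo hy
    rw [hF y]
    have : (∫ ξ in (0:ℝ)..y, 1 / (Real.cos ξ ^ 2 *
        Real.sqrt ((k : ℝ) ^ 2 + ((m : ℝ) ^ 2 - (k : ℝ) ^ 2) * Real.cos ξ ^ 2)))
        = ∫ ξ in (0:ℝ)..y, 1 / (Real.cos ξ ^ 2 * p ξ) := by
      rfl
    rw [this, hI, hE_def, hA_def]
    field_simp
  -- derivative of E
  set D : ℝ → ℝ := fun y => (Real.cos y * p y + Real.sin y * p' y) / a -
      (b/a) * (-Real.sin y * C y + Real.cos y * (Real.cos y ^ 2 / p y)) with hD_def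
  have hEd : ∀ y, HasDerivAt E (D y) y := by
    intro y
    have h1 : HasDerivAt (fun y => Real.sin y * p y / a)
        ((Real.cos y * p y + Real.sin y * p' y) / a) y :=
      ((Real.hasDerivAt_sin y).mul (hpd y)).div_const a
    have h2 : HasDerivAt (fun y => (b/a) * (Real.cos y * C y))
        ((b/a) * (-Real.sin y * C y + Real.cos y * (Real.cos y ^ 2 / p y))) y :=
      ((Real.hasDerivAt_cos y).mul (hCd y)).const_mul _
    exact h1.sub h2
  -- deriv F = D on the open interval
  have hderivF : ∀ y ∈ Ioo (-(π/2)) (π/2), deriv F y = D y := by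
    intro y hy
    have hev : F =ᶠ[nhds y] E :=
      Filter.eventually_of_mem (isOpen_Ioo.mem_nhds hy) hFE
    rw [hev.deriv_eq]
    exact (hEd y).deriv
  -- continuity of D and its value at π/2
  have hDc : Continuous D := by
    simp only [hD_def]
    apply Continuous.sub
    · exact ((Real.continuous_cos.mul hpc).add (Real.continuous_sin.mul hp'c)).div_const a
    · exact continuous_const.mul (((Real.continuous_sin.neg.mul hCc)).add
        (Real.continuous_cos.mul ((Real.continuous_cos.pow 2).div hpc fun y => (hp y).ne')))
  have hDval : D (π/2) = (b/a) * C (π/2) := by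
    simp only [hD_def, hp'_def]
    rw [Real.cos_pi_div_two, Real.sin_pi_div_two]
    ring
  -- the limit
  refine ⟨(b/a) * C (π/2), ?_, ?_⟩
  · have hCpos : 0 < C (π/2) := by
      rw [hC_def]
      apply intervalIntegral.intervalIntegral_pos_of_pos_on (hhc.intervalIntegrable _ _)
      · intro x hx
        have hc : 0 < Real.cos x := Real.cos_pos_of_mem_Ioo ⟨by linarith [hx.1, pi_pos], hx.2⟩
        have := hp x
        positivity
      · linarith [pi_pos]
    exact mul_ne_zero (div_ne_zero hb ha.ne') hCpos.ne'
  · have hmem : Ioo (-(π/2)) (π/2) ∈ nhdsWithin (π/2) (Set.Iio (π/2)) :=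
      Ioo_mem_nhdsLT (by linarith [pi_pos])
    have hcongr : deriv F =ᶠ[nhdsWithin (π/2) (Set.Iio (π/2))] D :=
      Filter.eventually_of_mem hmem hderivF
    have hDlim : Tendsto D (nhdsWithin (π/2) (Set.Iio (π/2))) (nhds ((b/a) * C (π/2))) := by
      rw [← hDval]
      exact (hDc.tendsto (π/2)).mono_left nhdsWithin_le_nhds
    exact hDlim.congr' hcongr.symm
end

section
/- Let m and k be positive integers with m ≠ k, let λ be a real number, and set a = (m² − k²)/(m² + k²), b = −(m² − k²)/(m² + k²), d = λ(m² − k²)/(m² + k²). If the polynomial Q*(μ) = a(2μ−1)² − b(2μ−1) − d vanishes at some integer μ₀, then λ = 2μ₀(2μ₀ − 1); consequently, if in addition 0 ≤ λ < 6 and λ ≠ 0, then λ = 2. -/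
open Real

/-- If the polynomial `Q*(μ) = a(2μ−1)² − b(2μ−1) − d`, with coefficients
`a = (m² − k²)/(m² + k²)`, `b = −a`, `d = λa`, `m ≠ k`, vanishes at an integer `μ₀`, then
`λ = 2μ₀(2μ₀ − 1)`; consequently if moreover `0 ≤ λ < 6` and `λ ≠ 0` then `λ = 2`. -/
theorem MWI_coexistence_eigenvalue (m k : ℕ) (hm : 0 < m) (hk : 0 < k) (hmk : m ≠ k)
    (lam a b d : ℝ)
    (ha : a = ((m : ℝ) ^ 2 - (k : ℝ) ^ 2) / ((m : ℝ) ^ 2 + (k : ℝ) ^ 2))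
    (hb : b = -(((m : ℝ) ^ 2 - (k : ℝ) ^ 2) / ((m : ℝ) ^ 2 + (k : ℝ) ^ 2)))
    (hd : d = lam * (((m : ℝ) ^ 2 - (k : ℝ) ^ 2) / ((m : ℝ) ^ 2 + (k : ℝ) ^ 2)))
    (μ₀ : ℤ)
    (hQ : a * (2 * (μ₀ : ℝ) - 1) ^ 2 - b * (2 * (μ₀ : ℝ) - 1) - d = 0) :
    lam = 2 * (μ₀ : ℝ) * (2 * (μ₀ : ℝ) - 1) ∧
      (0 ≤ lam → lam < 6 → lam ≠ 0 → lam = 2) := by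
  have hmkR : (m : ℝ) ≠ (k : ℝ) := by exact_mod_cast hmk
  have hm0 : (0 : ℝ) < (m : ℝ) := by exact_mod_cast hm
  have hk0 : (0 : ℝ) < (k : ℝ) := by exact_mod_cast hk
  have hnum : (m : ℝ) ^ 2 - (k : ℝ) ^ 2 ≠ 0 := by
    intro h
    have : (m : ℝ) ^ 2 = (k : ℝ) ^ 2 := by linarith
    exact hmkR (by nlinarith)
  have hden : (m : ℝ) ^ 2 + (k : ℝ) ^ 2 ≠ 0 := by positivity
  have ha0 : a ≠ 0 := by
    rw [ha]; exact div_ne_zero hnum hden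
  -- Q = a * ((2μ-1)^2 + (2μ-1) - λ)
  have hfac : a * ((2 * (μ₀ : ℝ) - 1) ^ 2 + (2 * (μ₀ : ℝ) - 1) - lam) = 0 := by
    rw [ha] at hQ ⊢; rw [hb, hd] at hQ; ring_nf at hQ ⊢; linarith
  have hlam : lam = 2 * (μ₀ : ℝ) * (2 * (μ₀ : ℝ) - 1) := by
    rcases mul_eq_zero.mp hfac with h | h
    · exact absurd h ha0
    · nlinarith
  refine ⟨hlam, fun h0 h6 hne => ?_⟩
  -- λ = 2μ₀(2μ₀-1), integer μ₀, 0 ≤ λ < 6, λ ≠ 0 ⇒ μ₀ = 1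
  have h1 : μ₀ = 1 := by
    by_contra hμ
    have hμ0 : μ₀ ≠ 0 := by
      intro h; rw [h] at hlam; simp at hlam; exact hne (by linarith [hlam])
    rcases lt_or_gt_of_ne hμ0 with hlt | hgt
    · have hle : μ₀ ≤ -1 := by omega
      have : (μ₀ : ℝ) ≤ -1 := by exact_mod_cast hle
      nlinarith [hlam, h6]
    · have : (2 : ℤ) ≤ μ₀ := by omega
      have h2 : (2 : ℝ) ≤ (μ₀ : ℝ) := by exact_mod_cast this
      nlinarith [hlam, h6]
  rw [h1] at hlam; norm_num at hlam; linarith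
end
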